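/- arXiv:1010.5454 — 4 statements merged into one kernel-verified Lean document; each statement's English description precedes it below -/
import Mathlib

section
/- A bounded sequence x ∈ l^∞(ℕ₀, X) satisfies σ(x) = ∅ if and only if x ∈ c₀(ℕ₀, X), i.e., lim_{n→∞} x(n) = 0. -/
noncomputable section
set_option maxHeartbeats 1600000
set_option synthInstance.maxHeartbeats 400000
open Filter Topology Metric Set

variable (X : Type*) [NormedAddCommGroup X] [NormedSpace ℂ X]

/-- `l^∞(ℕ₀, X)`, bounded `X`-valued sequences with sup norm. -/
abbrev Linf := lp (fun _ : ℕ => X) ⊤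

/-- The shift (translation) operator on `l^∞` as a linear map. -/
def shiftl : Linf X →ₗ[ℂ] Linf X where
  toFun x := ⟨fun n => x (n + 1), memℓp_infty (by
    obtain ⟨C, hC⟩ := (memℓp_infty_iff.1 (lp.memℓp x))
    exact ⟨C, by rintro - ⟨n, rfl⟩; exact hC ⟨n + 1, rfl⟩⟩)⟩
  map_add' x y := by ext n; simp [lp.coeFn_add]; rfl
  map_smul' c x := by ext n; simp [lp.coeFn_smul]

@[simp] lemma shiftl_apply (x : Linf X) (n : ℕ) : (shiftl X x : ∀ _ : ℕ, X) n = x (n + 1) := rfl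

/-- The shift operator on `l^∞` as a continuous linear map. -/
def shiftL : Linf X →L[ℂ] Linf X :=
  (shiftl X).mkContinuous 1 (fun x => by
    rw [one_mul]
    exact lp.norm_le_of_forall_le (norm_nonneg x) fun n =>
      lp.norm_apply_le_norm ENNReal.top_ne_zero x (n + 1))

/-- `c₀(ℕ₀, X)`, the subspace of sequences tending to `0`. -/
def c0 : Submodule ℂ (Linf X) where
  carrier := {x | Tendsto (fun n => x n) atTop (nhds 0)}
  zero_mem' := by simpa [lp.coeFn_zero] using tendsto_const_nhds
  add_mem' := by
    intro a b ha hb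
    have := ha.add hb
    simp only [lp.coeFn_add, Pi.add_apply, add_zero] at this ⊢
    exact this
  smul_mem' := by
    intro c a ha
    have : Tendsto (fun n => c • (a : ∀ _ : ℕ, X) n) atTop (nhds (c • (0:X))) := ha.const_smul c
    simpa [lp.coeFn_smul] using this

instance c0_isClosed : IsClosed ((c0 X : Set (Linf X))) := by
  refine IsSeqClosed.isClosed ?_
  intro f x hf hfx
  show Tendsto (fun n => (x : ∀ _ : ℕ, X) n) atTop (nhds 0)
  rw [Metric.tendsto_atTop] at hfx ⊢
  intro ε hε
  obtain ⟨K, hK⟩ := hfx (ε / 2) (by positivity)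
  have h2 : Tendsto (fun n => (f K : ∀ _ : ℕ, X) n) atTop (nhds 0) := hf K
  rw [Metric.tendsto_atTop] at h2
  obtain ⟨N, hN⟩ := h2 (ε / 2) (by positivity)
  refine ⟨N, fun n hn => ?_⟩
  have h3 : ‖(x : ∀ _ : ℕ, X) n - (f K : ∀ _ : ℕ, X) n‖ ≤ ‖x - f K‖ := by
    have := lp.norm_apply_le_norm ENNReal.top_ne_zero (x - f K) n
    simpa [lp.coeFn_sub] using this
  have h4 : ‖x - f K‖ < ε / 2 := by
    have := hK K le_rfl
    rwa [dist_comm, dist_eq_norm] at this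
  have h5 : ‖(f K : ∀ _ : ℕ, X) n‖ < ε / 2 := by
    have := hN n hn
    rwa [dist_eq_norm, sub_zero] at this
  have : ‖(x : ∀ _ : ℕ, X) n‖ ≤ ‖(x : ∀ _ : ℕ, X) n - (f K : ∀ _ : ℕ, X) n‖ + ‖(f K : ∀ _ : ℕ, X) n‖ := by
    simpa using norm_add_le ((x : ∀ _ : ℕ, X) n - (f K : ∀ _ : ℕ, X) n) ((f K : ∀ _ : ℕ, X) n)
  rw [dist_eq_norm, sub_zero]
  calc ‖(x : ∀ _ : ℕ, X) n‖ ≤ _ + _ := this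
    _ < ε / 2 + ε / 2 := add_lt_add (lt_of_le_of_lt h3 h4) h5
    _ = ε := add_halves ε

/-- The quotient space `Y = l^∞/c₀`. -/
abbrev YQ := Linf X ⧸ c0 X

lemma c0_shift_invariant : c0 X ≤ (c0 X).comap (shiftl X) := by
  intro x hx
  have : Tendsto (fun n => (x : ∀ _ : ℕ, X) (n + 1)) atTop (nhds 0) :=
    hx.comp (tendsto_add_atTop_nat 1)
  exact this

/-- The operator `S̄` induced by the shift on the quotient `Y`, as a linear map. -/
def SbarL : YQ X →ₗ[ℂ] YQ X := (c0 X).mapQ (c0 X) (shiftl X) (c0_shift_invariant X)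

/-- `S̄` as a continuous linear map on `Y`. -/
def Sbar : YQ X →L[ℂ] YQ X :=
  (SbarL X).mkContinuous 1 (by
    intro q
    rw [one_mul]
    refine le_of_forall_pos_le_add ?_
    intro ε hε
    obtain ⟨m, hm, hlt⟩ := Submodule.Quotient.norm_mk_lt q hε
    have h1 : SbarL X q = Submodule.Quotient.mk (shiftl X m) := by
      rw [← hm]; rfl
    calc ‖SbarL X q‖ = ‖(Submodule.Quotient.mk (shiftl X m) : YQ X)‖ := by rw [h1]
      _ ≤ ‖shiftl X m‖ := Submodule.Quotient.norm_mk_le _ _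
      _ ≤ ‖m‖ := by
          exact lp.norm_le_of_forall_le (norm_nonneg m) fun n =>
            lp.norm_apply_le_norm ENNReal.top_ne_zero m (n + 1)
      _ ≤ ‖q‖ + ε := hlt.le)

/-- The spectrum of a bounded sequence `x`: the set of points `z₀` of the unit circle at
which the `Y`-valued resolvent function `λ ↦ R(λ, S̄) x̄` (defined for `|λ| ≠ 1`) has no
holomorphic extension. -/
def specSeq (x : Linf X) : Set ℂ :=
  {z₀ : ℂ | ‖z₀‖ = 1 ∧
    ¬ ∃ (U : Set ℂ) (h : ℂ → YQ X), IsOpen U ∧ z₀ ∈ U ∧ DifferentiableOn ℂ h U ∧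
      ∀ z ∈ U, ‖z‖ ≠ 1 → z • h z - SbarL X (h z) = Submodule.Quotient.mk x}



section AbstractWrappers

variable {E : Type*} [NormedAddCommGroup E] [NormedSpace ℂ E] [CompleteSpace E]

lemma aux_diff_resolvent (a : E →L[ℂ] E) {z : ℂ} (hz : z ∈ resolventSet ℂ a) :
    DifferentiableAt ℂ (resolvent a) z :=
  (spectrum.hasDerivAt_resolvent hz).differentiableAt

lemma aux_mem_res_of_big (a : E →L[ℂ] E) (ha : ‖a‖ ≤ 1) {z : ℂ} (h : 1 < ‖z‖) :
    z ∈ resolventSet ℂ a := by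
  refine spectrum.mem_resolventSet_of_norm_lt_mul ?_
  calc ‖a‖ * ‖(1 : E →L[ℂ] E)‖ ≤ 1 * 1 :=
        mul_le_mul ha ContinuousLinearMap.norm_id_le (norm_nonneg _) zero_le_one
    _ = 1 := one_mul 1
    _ < ‖z‖ := h

lemma aux_mem_res_of_small (a t : E →L[ℂ] E) (h1 : a * t = 1) (h2 : t * a = 1)
    (ht : ‖t‖ ≤ 1) {z : ℂ} (hz : ‖z‖ < 1) : z ∈ resolventSet ℂ a := by
  rw [spectrum.mem_resolventSet_iff]
  have hsm : ‖z • t‖ < 1 :=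
    lt_of_le_of_lt ((ContinuousLinearMap.opNorm_smul_le z t).trans
      (mul_le_of_le_one_right (norm_nonneg z) ht)) hz
  refine ⟨-((⟨a, t, h1, h2⟩ : (E →L[ℂ] E)ˣ) * Units.oneSub (z • t) hsm), ?_⟩
  rw [Units.val_neg, Units.val_mul, Units.val_oneSub]
  show -(a * (1 - z • t)) = _
  rw [mul_sub, mul_one, mul_smul_comm, h1, neg_sub, Algebra.algebraMap_eq_smul_one]

lemma aux_res_tendsto (a : E →L[ℂ] E) :
    Tendsto (resolvent a) (Bornology.cobounded ℂ) (nhds 0) :=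
  spectrum.resolvent_tendsto_cobounded a

lemma aux_mul_res (a : E →L[ℂ] E) {z : ℂ} (hz : z ∈ resolventSet ℂ a) :
    (algebraMap ℂ (E →L[ℂ] E) z - a) * resolvent a z = 1 :=
  Ring.mul_inverse_cancel _ (spectrum.mem_resolventSet_iff.1 hz)

lemma aux_res_mul (a : E →L[ℂ] E) {z : ℂ} (hz : z ∈ resolventSet ℂ a) :
    resolvent a z * (algebraMap ℂ (E →L[ℂ] E) z - a) = 1 :=
  Ring.inverse_mul_cancel _ (spectrum.mem_resolventSet_iff.1 hz)

lemma aux_algebraMap_sub_apply (z : ℂ) (a : E →L[ℂ] E) (v : E) :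
    (algebraMap ℂ (E →L[ℂ] E) z - a) v = z • v - a v := by
  rw [ContinuousLinearMap.sub_apply, Algebra.algebraMap_eq_smul_one,
    ContinuousLinearMap.smul_apply, ContinuousLinearMap.one_apply]

end AbstractWrappers

/-- The right-shift operator on `l^∞` as a linear map. -/
def shiftr : Linf X →ₗ[ℂ] Linf X where
  toFun x := ⟨fun n => Nat.casesOn n 0 (fun m => x m), memℓp_infty ⟨‖x‖, by
    rintro - ⟨n, rfl⟩
    cases n with
    | zero => simpa using norm_nonneg x
    | succ m => exact lp.norm_apply_le_norm ENNReal.top_ne_zero x m⟩⟩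
  map_add' x y := by
    ext n
    cases n with
    | zero => simp [lp.coeFn_add]; exact (add_zero (0 : X)).symm
    | succ m => simp [lp.coeFn_add]; rfl
  map_smul' c x := by ext n; cases n <;> simp [lp.coeFn_smul]

lemma c0_shiftr_invariant : c0 X ≤ (c0 X).comap (shiftr X) := by
  intro x hx
  show Tendsto (fun n => (shiftr X x : ∀ _ : ℕ, X) n) atTop (nhds 0)
  have hx' : Tendsto (fun n => (shiftr X x : ∀ _ : ℕ, X) (n + 1)) atTop (nhds 0) := hx
  exact (Filter.tendsto_add_atTop_iff_nat 1).1 hx'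

/-- The operator induced by the right shift on the quotient `Y`, as a linear map. -/
def TbarL : YQ X →ₗ[ℂ] YQ X := (c0 X).mapQ (c0 X) (shiftr X) (c0_shiftr_invariant X)

/-- The right shift as a continuous linear map on `Y`. -/
def Tbar : YQ X →L[ℂ] YQ X :=
  (TbarL X).mkContinuous 1 (by
    intro q
    rw [one_mul]
    refine le_of_forall_pos_le_add ?_
    intro ε hε
    obtain ⟨m, hm, hlt⟩ := Submodule.Quotient.norm_mk_lt q hε
    have h1 : TbarL X q = Submodule.Quotient.mk (shiftr X m) := by
      rw [← hm]; rfl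
    calc ‖TbarL X q‖ = ‖(Submodule.Quotient.mk (shiftr X m) : YQ X)‖ := by rw [h1]
      _ ≤ ‖shiftr X m‖ := Submodule.Quotient.norm_mk_le _ _
      _ ≤ ‖m‖ := by
          refine lp.norm_le_of_forall_le (norm_nonneg m) fun n => ?_
          cases n with
          | zero =>
            show ‖(0 : X)‖ ≤ ‖m‖
            rw [norm_zero]; exact norm_nonneg m
          | succ k => exact lp.norm_apply_le_norm ENNReal.top_ne_zero m k
      _ ≤ ‖q‖ + ε := hlt.le)

@[simp] lemma Sbar_apply (q : YQ X) : Sbar X q = SbarL X q := rfl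

@[simp] lemma Tbar_apply (q : YQ X) : Tbar X q = TbarL X q := rfl

lemma Sbar_norm_le : ‖Sbar X‖ ≤ 1 := LinearMap.mkContinuous_norm_le _ zero_le_one _

lemma Tbar_norm_le : ‖Tbar X‖ ≤ 1 := LinearMap.mkContinuous_norm_le _ zero_le_one _

lemma Sbar_mul_Tbar : Sbar X * Tbar X = 1 := by
  ext q
  obtain ⟨m, rfl⟩ := Submodule.Quotient.mk_surjective (c0 X) q
  have h1 : Tbar X (Submodule.Quotient.mk m) = Submodule.Quotient.mk (shiftr X m) := rfl
  have h2 : Sbar X (Submodule.Quotient.mk (shiftr X m)) =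
      Submodule.Quotient.mk (shiftl X (shiftr X m)) := rfl
  have h3 : shiftl X (shiftr X m) = m := by ext n; rfl
  simp only [ContinuousLinearMap.mul_apply, ContinuousLinearMap.one_apply, h1, h2, h3]

lemma Tbar_mul_Sbar : Tbar X * Sbar X = 1 := by
  ext q
  obtain ⟨m, rfl⟩ := Submodule.Quotient.mk_surjective (c0 X) q
  have h1 : Sbar X (Submodule.Quotient.mk m) = Submodule.Quotient.mk (shiftl X m) := rfl
  have h2 : Tbar X (Submodule.Quotient.mk (shiftl X m)) =
      Submodule.Quotient.mk (shiftr X (shiftl X m)) := rfl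
  simp only [ContinuousLinearMap.mul_apply, ContinuousLinearMap.one_apply, h1, h2]
  rw [Submodule.Quotient.eq]
  show Tendsto (fun n => ((shiftr X (shiftl X m) - m : Linf X) : ∀ _ : ℕ, X) n) atTop (nhds 0)
  rw [← Filter.tendsto_add_atTop_iff_nat 1]
  have key : (fun n => ((shiftr X (shiftl X m) - m : Linf X) : ∀ _ : ℕ, X) (n + 1)) =
      fun _ => 0 := by
    funext n
    have : ((shiftr X (shiftl X m) - m : Linf X) : ∀ _ : ℕ, X) (n + 1)
        = (shiftr X (shiftl X m) : ∀ _ : ℕ, X) (n + 1) - (m : ∀ _ : ℕ, X) (n + 1) := by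
      simp [lp.coeFn_sub]
    rw [this]
    show (m : ∀ _ : ℕ, X) (n + 1) - (m : ∀ _ : ℕ, X) (n + 1) = 0
    exact sub_self _
  rw [key]
  exact tendsto_const_nhds

lemma sbar_isUnit [CompleteSpace X] : IsUnit (Sbar X) :=
  ⟨⟨Sbar X, Tbar X, Sbar_mul_Tbar X, Tbar_mul_Sbar X⟩, rfl⟩

lemma mem_res [CompleteSpace X] (z : ℂ) (hz : ‖z‖ ≠ 1) : z ∈ resolventSet ℂ (Sbar X) := by
  rcases lt_or_gt_of_ne hz with hlt | hgt
  · exact aux_mem_res_of_small (Sbar X) (Tbar X) (Sbar_mul_Tbar X) (Tbar_mul_Sbar X)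
      (Tbar_norm_le X) hlt
  · exact aux_mem_res_of_big (Sbar X) (Sbar_norm_le X) hgt

lemma res_eq [CompleteSpace X] (x : Linf X) {z : ℂ} (hz : ‖z‖ ≠ 1) :
    z • (resolvent (Sbar X) z (Submodule.Quotient.mk x))
      - SbarL X (resolvent (Sbar X) z (Submodule.Quotient.mk x))
      = (Submodule.Quotient.mk x : YQ X) := by
  have h2 := aux_mul_res (Sbar X) (mem_res X z hz)
  have h3 := congrArg (fun f : YQ X →L[ℂ] YQ X => f (Submodule.Quotient.mk x)) h2
  simp only [ContinuousLinearMap.mul_apply, ContinuousLinearMap.one_apply] at h3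
  rw [aux_algebraMap_sub_apply] at h3
  simpa using h3

lemma ext_eq_res [CompleteSpace X] (x : Linf X) {U : Set ℂ} {h : ℂ → YQ X}
    (heq : ∀ z ∈ U, ‖z‖ ≠ 1 → z • h z - SbarL X (h z) = Submodule.Quotient.mk x)
    {z : ℂ} (hzU : z ∈ U) (hz : ‖z‖ ≠ 1) :
    h z = resolvent (Sbar X) z (Submodule.Quotient.mk x) := by
  have e1 : (algebraMap ℂ (YQ X →L[ℂ] YQ X) z - Sbar X) (h z) = Submodule.Quotient.mk x := by
    rw [aux_algebraMap_sub_apply]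
    simpa using heq z hzU hz
  have h2 := aux_res_mul (Sbar X) (mem_res X z hz)
  calc h z = (resolvent (Sbar X) z * (algebraMap ℂ (YQ X →L[ℂ] YQ X) z - Sbar X)) (h z) := by
        rw [h2]; rfl
    _ = resolvent (Sbar X) z ((algebraMap ℂ (YQ X →L[ℂ] YQ X) z - Sbar X) (h z)) := rfl
    _ = resolvent (Sbar X) z (Submodule.Quotient.mk x) := by rw [e1]

lemma ext_agree [CompleteSpace X] (x : Linf X) {U₁ U₂ : Set ℂ} {h₁ h₂ : ℂ → YQ X}
    (hU₁ : IsOpen U₁) (hU₂ : IsOpen U₂)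
    (hd₁ : DifferentiableOn ℂ h₁ U₁) (hd₂ : DifferentiableOn ℂ h₂ U₂)
    (he₁ : ∀ z ∈ U₁, ‖z‖ ≠ 1 → z • h₁ z - SbarL X (h₁ z) = Submodule.Quotient.mk x)
    (he₂ : ∀ z ∈ U₂, ‖z‖ ≠ 1 → z • h₂ z - SbarL X (h₂ z) = Submodule.Quotient.mk x)
    {z : ℂ} (hz₁ : z ∈ U₁) (hz₂ : z ∈ U₂) : h₁ z = h₂ z := by
  by_cases hz : ‖z‖ = 1
  · set seq : ℕ → ℂ := fun k => ((1 : ℝ) + 1 / (k + 1)) • z with hseqdef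
    have hlim : Tendsto seq atTop (nhds z) := by
      have h0 : Tendsto (fun k : ℕ => (1 : ℝ) + 1 / (k + 1)) atTop (nhds 1) := by
        simpa using tendsto_one_div_add_atTop_nhds_zero_nat.const_add (1 : ℝ)
      have h1 := h0.smul_const z
      rw [one_smul] at h1
      exact h1
    have hev1 : ∀ᶠ k in atTop, seq k ∈ U₁ := hlim (hU₁.mem_nhds hz₁)
    have hev2 : ∀ᶠ k in atTop, seq k ∈ U₂ := hlim (hU₂.mem_nhds hz₂)
    have hnorm : ∀ k : ℕ, ‖seq k‖ ≠ 1 := by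
      intro k
      have hpos : (0 : ℝ) < 1 / (k + 1) := by positivity
      have : ‖seq k‖ = ((1 : ℝ) + 1 / (k + 1)) * ‖z‖ := by
        show ‖((1 : ℝ) + 1 / (k + 1)) • z‖ = _
        rw [norm_smul, Real.norm_eq_abs, abs_of_pos (by positivity)]
      rw [this, hz, mul_one]
      intro hcontra
      linarith
    have t1 : Tendsto (fun k => h₁ (seq k)) atTop (nhds (h₁ z)) :=
      ((hd₁.differentiableAt (hU₁.mem_nhds hz₁)).continuousAt.tendsto).comp hlim
    have t2 : Tendsto (fun k => h₂ (seq k)) atTop (nhds (h₂ z)) :=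
      ((hd₂.differentiableAt (hU₂.mem_nhds hz₂)).continuousAt.tendsto).comp hlim
    refine tendsto_nhds_unique (t1.congr' ?_) t2
    filter_upwards [hev1, hev2] with k hk1 hk2
    rw [ext_eq_res X x he₁ hk1 (hnorm k), ext_eq_res X x he₂ hk2 (hnorm k)]
  · rw [ext_eq_res X x he₁ hz₁ hz, ext_eq_res X x he₂ hz₂ hz]

lemma key_lemma [CompleteSpace X] (x : Linf X)
    (hP : ∀ z₀ : ℂ, ‖z₀‖ = 1 → ∃ (U : Set ℂ) (h : ℂ → YQ X), IsOpen U ∧ z₀ ∈ U ∧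
      DifferentiableOn ℂ h U ∧
      ∀ z ∈ U, ‖z‖ ≠ 1 → z • h z - SbarL X (h z) = Submodule.Quotient.mk x) :
    (Submodule.Quotient.mk x : YQ X) = 0 := by
  classical
  choose U H hopen hmem hdiff heqn using hP
  set G : ℂ → YQ X := fun z => resolvent (Sbar X) z (Submodule.Quotient.mk x) with hG
  set F : ℂ → YQ X := fun z => if hz : ‖z‖ = 1 then H z hz z else G z with hF
  have hFoff : ∀ z : ℂ, ‖z‖ ≠ 1 → F z = G z := fun z hz => dif_neg hz
  have hFenv : ∀ (z₀ : ℂ) (h1 : ‖z₀‖ = 1), ∀ z ∈ U z₀ h1, F z = H z₀ h1 z := by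
    intro z₀ h1 z hzU
    by_cases hz : ‖z‖ = 1
    · have hag := ext_agree X x (hopen z hz) (hopen z₀ h1) (hdiff z hz) (hdiff z₀ h1)
        (heqn z hz) (heqn z₀ h1) (hmem z hz) hzU
      have : F z = H z hz z := dif_pos hz
      rw [this, hag]
    · rw [hFoff z hz, hG]
      exact (ext_eq_res X x (heqn z₀ h1) hzU hz).symm
  have hGdiff : ∀ z : ℂ, ‖z‖ ≠ 1 → DifferentiableAt ℂ G z := by
    intro z hz
    have h1 : DifferentiableAt ℂ (resolvent (Sbar X)) z :=
      aux_diff_resolvent (Sbar X) (mem_res X z hz)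
    exact h1.clm_apply (differentiableAt_const _)
  have hopen_ne : IsOpen {w : ℂ | ‖w‖ ≠ 1} := by
    have : {w : ℂ | ‖w‖ ≠ 1} = (fun w : ℂ => ‖w‖) ⁻¹' {(1 : ℝ)}ᶜ := rfl
    rw [this]
    exact isOpen_compl_singleton.preimage continuous_norm
  have hFdiff : Differentiable ℂ F := by
    intro z₀
    by_cases hz : ‖z₀‖ = 1
    · have hUopen := hopen z₀ hz
      have hnbd : U z₀ hz ∈ nhds z₀ := hUopen.mem_nhds (hmem z₀ hz)
      have hev : F =ᶠ[nhds z₀] H z₀ hz := by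
        filter_upwards [hnbd] with w hw using hFenv z₀ hz w hw
      exact hev.differentiableAt_iff.2 ((hdiff z₀ hz).differentiableAt hnbd)
    · have hev : F =ᶠ[nhds z₀] G := by
        filter_upwards [hopen_ne.mem_nhds hz] with w hw using hFoff w hw
      exact hev.differentiableAt_iff.2 (hGdiff z₀ hz)
  have htendG : Tendsto G (Bornology.cobounded ℂ) (nhds 0) := by
    have h1 := aux_res_tendsto (Sbar X)
    have h2 : Tendsto (fun f : YQ X →L[ℂ] YQ X => f (Submodule.Quotient.mk x))
        (nhds 0) (nhds ((0 : YQ X →L[ℂ] YQ X) (Submodule.Quotient.mk x))) :=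
      (ContinuousLinearMap.apply ℂ (YQ X) (Submodule.Quotient.mk x)).continuous.tendsto 0
    have h3 := h2.comp h1
    simp only [ContinuousLinearMap.zero_apply] at h3
    exact h3
  have hsphere_mem : {w : ℂ | ‖w‖ ≠ 1} ∈ Bornology.cobounded ℂ := by
    have hco : Bornology.IsCobounded {w : ℂ | ‖w‖ ≠ 1} := by
      have hbs : Bornology.IsBounded (Metric.sphere (0 : ℂ) 1) := isBounded_sphere
      have hset : {w : ℂ | ‖w‖ ≠ 1}ᶜ = Metric.sphere (0 : ℂ) 1 := by
        ext w; simp [Metric.mem_sphere, dist_zero_right]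
      exact Bornology.isBounded_compl_iff.1 (by rw [hset]; exact hbs)
    exact hco
  have hFtend : Tendsto F (Bornology.cobounded ℂ) (nhds 0) := by
    refine htendG.congr' ?_
    filter_upwards [hsphere_mem] with w hw using (hFoff w hw).symm
  have hbdd : Bornology.IsBounded (range F) := by
    have h1 : ∀ᶠ w in Bornology.cobounded ℂ, F w ∈ Metric.ball (0 : YQ X) 1 :=
      hFtend (Metric.ball_mem_nhds 0 one_pos)
    set s : Set ℂ := {w : ℂ | F w ∈ Metric.ball (0 : YQ X) 1} with hs
    have hsC : Bornology.IsBounded sᶜ := Bornology.isBounded_compl_iff.2 h1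
    have hcomp : IsCompact (closure sᶜ) := hsC.isCompact_closure
    have himg : Bornology.IsBounded (F '' closure sᶜ) :=
      (hcomp.image hFdiff.continuous).isBounded
    refine (himg.union (isBounded_closedBall (x := (0 : YQ X)) (r := 1))).subset ?_
    rintro - ⟨w, rfl⟩
    by_cases hws : w ∈ s
    · right
      exact Metric.ball_subset_closedBall hws
    · left
      exact ⟨w, subset_closure hws, rfl⟩
  have hconst : ∀ z w : ℂ, F z = F w := fun z w =>
    hFdiff.apply_eq_apply_of_bounded hbdd z w
  have hF0 : F 0 = 0 := by
    have hc : Tendsto (fun _ : ℂ => F 0) (Bornology.cobounded ℂ) (nhds 0) :=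
      hFtend.congr fun z => hconst z 0
    exact tendsto_nhds_unique tendsto_const_nhds hc
  have hz2 : ‖(2 : ℂ)‖ ≠ 1 := by
    norm_num [Complex.norm_two]
  have hG2 : G 2 = 0 := by
    have h := (hconst 2 0).trans hF0
    rw [hFoff 2 hz2] at h
    exact h
  have hre' : (2 : ℂ) • G 2 - SbarL X (G 2) = Submodule.Quotient.mk x := res_eq X x (z := 2) hz2
  rw [hG2] at hre'
  simpa using hre'.symm

/-- `σ(x) = ∅` iff `x(n) → 0`. -/
theorem stmt6 [CompleteSpace X] (x : Linf X) :
    specSeq X x = ∅ ↔ Tendsto (fun n => (x : ∀ _ : ℕ, X) n) atTop (nhds 0) := by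
  constructor
  · intro hempty
    have hP : ∀ z₀ : ℂ, ‖z₀‖ = 1 → ∃ (U : Set ℂ) (h : ℂ → YQ X), IsOpen U ∧ z₀ ∈ U ∧
        DifferentiableOn ℂ h U ∧
        ∀ z ∈ U, ‖z‖ ≠ 1 → z • h z - SbarL X (h z) = Submodule.Quotient.mk x := by
      intro z₀ hz₀
      by_contra hc
      have : z₀ ∈ specSeq X x := ⟨hz₀, hc⟩
      rw [hempty] at this
      exact this
    have h0 := key_lemma X x hP
    have hx : x ∈ c0 X := (Submodule.Quotient.mk_eq_zero _).1 h0
    exact hx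
  · intro hx
    have hx0 : (Submodule.Quotient.mk x : YQ X) = 0 := (Submodule.Quotient.mk_eq_zero _).2 hx
    rw [eq_empty_iff_forall_notMem]
    rintro z₀ ⟨hz₀, hc⟩
    exact hc ⟨univ, fun _ => 0, isOpen_univ, mem_univ _,
      (differentiable_const _).differentiableOn, fun z _ _ => by simp [hx0]⟩
end
end

section
/- If the Z-transform x̃(z) of a bounded sequence x ∈ l^∞(ℕ₀, X) extends holomorphically to a neighborhood of a point z₀ on the unit circle, then z₀ ∉ σ(x). Consequently, σ(x) ⊆ σ_Z(x), where σ_Z(x) is the set of points of Γ to which x̃ has no holomorphic extension. -/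
noncomputable section
open Filter Topology Metric Set

variable (X : Type*) [NormedAddCommGroup X] [NormedSpace ℂ X]

/-- The Z-transform of a bounded sequence: `x̃(z) = ∑_{j≥0} x(j) z^{-j}`. -/
def ztrans (x : Linf X) (z : ℂ) : X := ∑' j : ℕ, (z⁻¹) ^ j • (x : ∀ _ : ℕ, X) j

/-- The Z-spectrum of a bounded sequence: the set of points of the unit circle to which
the Z-transform has no holomorphic extension. -/
def sigmaZ (x : Linf X) : Set ℂ :=
  {z₀ : ℂ | ‖z₀‖ = 1 ∧
    ¬ ∃ (U : Set ℂ) (g : ℂ → X), IsOpen U ∧ z₀ ∈ U ∧ DifferentiableOn ℂ g U ∧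
      ∀ z ∈ U, 1 < ‖z‖ → g z = ztrans X x z}

namespace Stmt14Aux

variable {X : Type*} [NormedAddCommGroup X] [NormedSpace ℂ X]

/-- Evaluation functional on `l^∞`. -/
def eL (n : ℕ) : Linf X →L[ℂ] X :=
  LinearMap.mkContinuous
    { toFun := fun f => f n
      map_add' := fun f g => by simp [lp.coeFn_add]
      map_smul' := fun c f => by simp [lp.coeFn_smul] }
    1 (fun f => by rw [one_mul]; exact lp.norm_apply_le_norm ENNReal.top_ne_zero f n)

@[simp] lemma eL_apply (n : ℕ) (f : Linf X) : eL n f = f n := rfl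

/-- The quotient map onto `Y` as a continuous linear map. -/
def piq : Linf X →L[ℂ] YQ X :=
  LinearMap.mkContinuous (c0 X).mkQ 1
    (fun m => by simpa using Submodule.Quotient.norm_mk_le (c0 X) m)

@[simp] lemma piq_apply (m : Linf X) :
    (piq m : YQ X) = Submodule.Quotient.mk m := rfl

/-- The auxiliary family of holomorphic functions. -/
def Hf (x : Linf X) (g : ℂ → X) (n : ℕ) (z : ℂ) : X :=
  z ^ n • g z - ∑ j ∈ Finset.range n, z ^ (n - j) • (x : ∀ _ : ℕ, X) j

lemma Hf_rec (x : Linf X) (g : ℂ → X) (n : ℕ) (z : ℂ) :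
    Hf x g (n + 1) z = z • Hf x g n z - z • (x : ∀ _ : ℕ, X) n := by
  have h1 : z ^ (n + 1) • g z = z • z ^ n • g z := by
    rw [smul_smul, ← pow_succ']
  have h2 : ∀ j ∈ Finset.range n,
      z ^ (n + 1 - j) • (x : ∀ _ : ℕ, X) j = z • z ^ (n - j) • (x : ∀ _ : ℕ, X) j := by
    intro j hj
    have hj' : j ≤ n := (Finset.mem_range.1 hj).le
    rw [smul_smul, ← pow_succ', Nat.succ_sub hj']
  have h3 : n + 1 - n = 1 := by omega
  simp only [Hf, Finset.sum_range_succ, h3, pow_one]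
  rw [h1, Finset.sum_congr rfl h2, ← Finset.smul_sum, smul_sub]
  abel

lemma Hf_diff {x : Linf X} {g : ℂ → X} {U : Set ℂ} (hg : DifferentiableOn ℂ g U) (n : ℕ) :
    DifferentiableOn ℂ (Hf x g n) U := by
  refine DifferentiableOn.sub ((differentiableOn_pow n).smul hg) ?_
  exact DifferentiableOn.fun_sum fun j _ => (differentiableOn_pow _).smul (differentiableOn_const _)


lemma sum_pow_le {a : ℝ} (h0 : 0 ≤ a) (h1 : a < 1) (n : ℕ) :
    ∑ j ∈ Finset.range n, a ^ (n - j) ≤ (1 - a)⁻¹ := by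
  have hre := Finset.sum_range_reflect (fun j => a ^ (j + 1)) n
  have e1 : ∑ j ∈ Finset.range n, a ^ (n - j) = ∑ j ∈ Finset.range n, a ^ (j + 1) := by
    rw [← hre]
    refine Finset.sum_congr rfl fun j hj => ?_
    have : j < n := Finset.mem_range.1 hj
    congr 1
    omega
  rw [e1]
  have h2 : ∀ j ∈ Finset.range n, a ^ (j + 1) ≤ a ^ j := fun j _ =>
    pow_le_pow_of_le_one h0 h1.le (by omega)
  calc ∑ j ∈ Finset.range n, a ^ (j + 1) ≤ ∑ j ∈ Finset.range n, a ^ j :=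
        Finset.sum_le_sum h2
    _ ≤ ∑' j : ℕ, a ^ j :=
        Summable.sum_le_tsum _ (fun i _ => pow_nonneg h0 i)
          (summable_geometric_of_lt_one h0 h1)
    _ = (1 - a)⁻¹ := tsum_geometric_of_lt_one h0 h1

lemma Hf_norm_le_inner {x : Linf X} {g : ℂ → X} {M : ℝ} {z : ℂ} (n : ℕ)
    (hz : ‖z‖ < 1) (hM : ‖g z‖ ≤ M) (hM0 : 0 ≤ M) :
    ‖Hf x g n z‖ ≤ M + ‖x‖ * (1 - ‖z‖)⁻¹ := by
  refine (norm_sub_le _ _).trans (add_le_add ?_ ?_)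
  · rw [norm_smul, norm_pow]
    calc ‖z‖ ^ n * ‖g z‖ ≤ 1 * M :=
      mul_le_mul (pow_le_one₀ (norm_nonneg z) hz.le) hM (norm_nonneg _) zero_le_one
    _ = M := one_mul M
  · calc ‖∑ j ∈ Finset.range n, z ^ (n - j) • (x : ∀ _ : ℕ, X) j‖
        ≤ ∑ j ∈ Finset.range n, ‖z ^ (n - j) • (x : ∀ _ : ℕ, X) j‖ :=
          norm_sum_le _ _
    _ ≤ ∑ j ∈ Finset.range n, ‖z‖ ^ (n - j) * ‖x‖ := by
          refine Finset.sum_le_sum fun j _ => ?_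
          rw [norm_smul, norm_pow]
          exact mul_le_mul_of_nonneg_left
            (lp.norm_apply_le_norm ENNReal.top_ne_zero x j) (by positivity)
    _ = (∑ j ∈ Finset.range n, ‖z‖ ^ (n - j)) * ‖x‖ := by rw [Finset.sum_mul]
    _ ≤ (1 - ‖z‖)⁻¹ * ‖x‖ := by
          exact mul_le_mul_of_nonneg_right (sum_pow_le (norm_nonneg z) hz n) (norm_nonneg x)
    _ = ‖x‖ * (1 - ‖z‖)⁻¹ := mul_comm _ _

lemma Hf_eq_tail [CompleteSpace X] {x : Linf X} {g : ℂ → X} {z : ℂ} (n : ℕ)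
    (hz : 1 < ‖z‖) (hgz : g z = ztrans X x z) :
    Hf x g n z = ∑' k : ℕ, (z⁻¹) ^ k • (x : ∀ _ : ℕ, X) (k + n) := by
  have hz0 : z ≠ 0 := by
    intro h; rw [h, norm_zero] at hz; linarith
  have hinv : ‖z⁻¹‖ < 1 := by
    rw [norm_inv]
    rw [inv_lt_one₀ (lt_trans zero_lt_one hz)]
    exact hz
  set f : ℕ → X := fun j => (z ^ n * (z⁻¹) ^ j) • (x : ∀ _ : ℕ, X) j with hf
  have hnorm : ∀ j, ‖f j‖ ≤ (‖z‖ ^ n * ‖x‖) * ‖z⁻¹‖ ^ j := by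
    intro j
    rw [hf]
    simp only [norm_smul, norm_mul, norm_pow]
    calc ‖z‖ ^ n * ‖z⁻¹‖ ^ j * ‖(x : ∀ _ : ℕ, X) j‖
        ≤ ‖z‖ ^ n * ‖z⁻¹‖ ^ j * ‖x‖ := by
          exact mul_le_mul_of_nonneg_left
            (lp.norm_apply_le_norm ENNReal.top_ne_zero x j) (by positivity)
      _ = (‖z‖ ^ n * ‖x‖) * ‖z⁻¹‖ ^ j := by ring
  have hsum : Summable f := by
    refine Summable.of_norm (Summable.of_nonneg_of_le (fun j => norm_nonneg _) hnorm ?_)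
    exact ((summable_geometric_of_lt_one (norm_nonneg _) hinv).mul_left _)
  have hsum0 : Summable (fun j => (z⁻¹) ^ j • (x : ∀ _ : ℕ, X) j) := by
    refine Summable.of_norm (Summable.of_nonneg_of_le (fun j => norm_nonneg _)
      (fun j => ?_) ((summable_geometric_of_lt_one (norm_nonneg z⁻¹) hinv).mul_left ‖x‖))
    rw [norm_smul, norm_pow, mul_comm]
    exact mul_le_mul_of_nonneg_right
      (lp.norm_apply_le_norm ENNReal.top_ne_zero x j) (by positivity)
  have key1 : z ^ n • g z = ∑' j, f j := by
    rw [hgz, ztrans, ← Summable.tsum_const_smul (z ^ n) hsum0]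
    exact tsum_congr fun j => by rw [hf, smul_smul]
  have key2 : ∑ j ∈ Finset.range n, z ^ (n - j) • (x : ∀ _ : ℕ, X) j
      = ∑ j ∈ Finset.range n, f j := by
    refine Finset.sum_congr rfl fun j hj => ?_
    have hj' : j ≤ n := (Finset.mem_range.1 hj).le
    rw [hf]
    congr 1
    rw [pow_sub₀ z hz0 hj', inv_pow]
  have key3 : ∀ k : ℕ, f (k + n) = (z⁻¹) ^ k • (x : ∀ _ : ℕ, X) (k + n) := by
    intro k
    have hfk : f (k + n) = (z ^ n * z⁻¹ ^ (k + n)) • (x : ∀ _ : ℕ, X) (k + n) := rfl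
    rw [hfk]
    congr 1
    rw [pow_add, ← mul_assoc, mul_comm (z ^ n), mul_assoc, ← mul_pow,
      mul_inv_cancel₀ hz0, one_pow, mul_one]
  have hsplit := Summable.sum_add_tsum_nat_add n hsum
  have h4 : ∑' (j : ℕ), f j - ∑ j ∈ Finset.range n, f j = ∑' (i : ℕ), f (i + n) := by
    rw [← hsplit, add_sub_cancel_left]
  rw [Hf, key1, key2, h4]
  exact tsum_congr key3

lemma Hf_norm_le_outer [CompleteSpace X] {x : Linf X} {g : ℂ → X} {z : ℂ} (n : ℕ)
    (hz : 1 < ‖z‖) (hgz : g z = ztrans X x z) :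
    ‖Hf x g n z‖ ≤ ‖x‖ * (1 - ‖z‖⁻¹)⁻¹ := by
  have hinv : ‖z‖⁻¹ < 1 := by
    rw [inv_lt_one₀ (lt_trans zero_lt_one hz)]; exact hz
  have hinv0 : (0:ℝ) ≤ ‖z‖⁻¹ := by positivity
  rw [Hf_eq_tail n hz hgz]
  have hb : ∀ k : ℕ, ‖(z⁻¹) ^ k • (x : ∀ _ : ℕ, X) (k + n)‖ ≤ ‖x‖ * (‖z‖⁻¹) ^ k := by
    intro k
    rw [norm_smul, norm_pow, norm_inv, mul_comm]
    exact mul_le_mul_of_nonneg_right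
      (lp.norm_apply_le_norm ENNReal.top_ne_zero x _) (by positivity)
  have hsn : Summable (fun k : ℕ => ‖x‖ * (‖z‖⁻¹) ^ k) :=
    (summable_geometric_of_lt_one hinv0 hinv).mul_left _
  have hsum : Summable (fun k => ‖(z⁻¹) ^ k • (x : ∀ _ : ℕ, X) (k + n)‖) :=
    Summable.of_nonneg_of_le (fun k => norm_nonneg _) hb hsn
  calc ‖∑' k : ℕ, (z⁻¹) ^ k • (x : ∀ _ : ℕ, X) (k + n)‖
      ≤ ∑' k, ‖(z⁻¹) ^ k • (x : ∀ _ : ℕ, X) (k + n)‖ := norm_tsum_le_tsum_norm hsum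
    _ ≤ ∑' k : ℕ, ‖x‖ * (‖z‖⁻¹) ^ k := Summable.tsum_le_tsum hb hsum hsn
    _ = ‖x‖ * (1 - ‖z‖⁻¹)⁻¹ := by
        rw [tsum_mul_left, tsum_geometric_of_lt_one hinv0 hinv]



section Beta

open Complex

/-- The two intersection points of `C(z₀, ρ)` with the unit circle. -/
noncomputable def ptA (z₀ : ℂ) (ρ : ℝ) : ℂ :=
  z₀ * ((((2 - ρ ^ 2 : ℝ) : ℂ)) / 2 + ((Real.sqrt (4 - (2 - ρ ^ 2) ^ 2) : ℝ) : ℂ) / 2 * Complex.I)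

noncomputable def ptB (z₀ : ℂ) (ρ : ℝ) : ℂ :=
  z₀ * ((((2 - ρ ^ 2 : ℝ) : ℂ)) / 2 - ((Real.sqrt (4 - (2 - ρ ^ 2) ^ 2) : ℝ) : ℂ) / 2 * Complex.I)

lemma sq_sqrt_aux {ρ : ℝ} (hρ : 0 < ρ) (hρ1 : ρ ≤ 1) :
    (Real.sqrt (4 - (2 - ρ ^ 2) ^ 2)) ^ 2 = 4 - (2 - ρ ^ 2) ^ 2 := by
  refine Real.sq_sqrt ?_
  have h : ρ ^ 2 ≤ 1 := by nlinarith
  nlinarith [sq_nonneg ρ]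

lemma beta_identity {z₀ w : ℂ} {ρ : ℝ} (hz₀ : ‖z₀‖ = 1) (hρ : 0 < ρ) (hρ1 : ρ ≤ 1)
    (hw : ‖w - z₀‖ = ρ) :
    ((Complex.normSq w : ℂ) - 1) * (w - z₀) =
      (starRingEnd ℂ) z₀ * ((w - ptA z₀ ρ) * (w - ptB z₀ ρ)) := by
  set t : ℝ := Real.sqrt (4 - (2 - ρ ^ 2) ^ 2) with htdef
  have ht : (t : ℂ) ^ 2 = 4 - (2 - (ρ : ℂ) ^ 2) ^ 2 := by
    have h5 : t ^ 2 = 4 - (2 - ρ ^ 2) ^ 2 := sq_sqrt_aux hρ hρ1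
    calc (t : ℂ) ^ 2 = ((t ^ 2 : ℝ) : ℂ) := by push_cast; ring
      _ = ((4 - (2 - ρ ^ 2) ^ 2 : ℝ) : ℂ) := by rw [h5]
      _ = 4 - (2 - (ρ : ℂ) ^ 2) ^ 2 := by push_cast; ring
  have h1 : (w - z₀) * ((starRingEnd ℂ) w - (starRingEnd ℂ) z₀) = (ρ : ℂ) ^ 2 := by
    have : (w - z₀) * (starRingEnd ℂ) (w - z₀) = (Complex.normSq (w - z₀) : ℂ) := by
      rw [Complex.mul_conj]
    rw [map_sub] at this
    rw [this, Complex.normSq_eq_norm_sq, hw]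
    push_cast
    ring
  have h2 : z₀ * (starRingEnd ℂ) z₀ = 1 := by
    rw [Complex.mul_conj, Complex.normSq_eq_norm_sq, hz₀]
    norm_num
  have hnw : (Complex.normSq w : ℂ) = w * (starRingEnd ℂ) w := by
    rw [Complex.mul_conj]
  rw [hnw, ptA, ptB]
  have e2 : (w - z₀ * ((((2 - ρ ^ 2 : ℝ) : ℂ)) / 2 + ((t : ℝ) : ℂ) / 2 * Complex.I)) *
      (w - z₀ * ((((2 - ρ ^ 2 : ℝ) : ℂ)) / 2 - ((t : ℝ) : ℂ) / 2 * Complex.I)) =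
      w ^ 2 - z₀ * (2 - (ρ:ℂ) ^ 2) * w + z₀ ^ 2 := by
    have hI : (Complex.I) ^ 2 = -1 := Complex.I_sq
    push_cast
    linear_combination ((z₀ ^ 2) / 4) * ht - (z₀ ^ 2 * (t:ℂ) ^ 2 / 4) * hI
  rw [e2]
  push_cast
  linear_combination w * h1 + ((1 - (ρ:ℂ) ^ 2) * w - z₀) * h2

lemma ptA_dist {z₀ : ℂ} {ρ : ℝ} (hz₀ : ‖z₀‖ = 1) (hρ : 0 < ρ) (hρ1 : ρ ≤ 1) :
    ‖ptA z₀ ρ - z₀‖ = ρ := by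
  set t : ℝ := Real.sqrt (4 - (2 - ρ ^ 2) ^ 2) with htdef
  have e : ptA z₀ ρ - z₀ = z₀ * (((-ρ ^ 2 / 2 : ℝ) : ℂ) + ((t / 2 : ℝ) : ℂ) * Complex.I) := by
    rw [ptA]
    push_cast
    ring
  rw [e, norm_mul, hz₀, one_mul, Complex.norm_add_mul_I]
  have ht2 : t ^ 2 = 4 - (2 - ρ ^ 2) ^ 2 := sq_sqrt_aux hρ hρ1
  have : (-ρ ^ 2 / 2) ^ 2 + (t / 2) ^ 2 = ρ ^ 2 := by linear_combination ht2 / 4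
  rw [this, Real.sqrt_sq hρ.le]

lemma ptB_dist {z₀ : ℂ} {ρ : ℝ} (hz₀ : ‖z₀‖ = 1) (hρ : 0 < ρ) (hρ1 : ρ ≤ 1) :
    ‖ptB z₀ ρ - z₀‖ = ρ := by
  set t : ℝ := Real.sqrt (4 - (2 - ρ ^ 2) ^ 2) with htdef
  have e : ptB z₀ ρ - z₀ = z₀ * (((-ρ ^ 2 / 2 : ℝ) : ℂ) + ((-t / 2 : ℝ) : ℂ) * Complex.I) := by
    rw [ptB]
    push_cast
    ring
  rw [e, norm_mul, hz₀, one_mul, Complex.norm_add_mul_I]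
  have ht2 : t ^ 2 = 4 - (2 - ρ ^ 2) ^ 2 := sq_sqrt_aux hρ hρ1
  have : (-ρ ^ 2 / 2) ^ 2 + (-t / 2) ^ 2 = ρ ^ 2 := by linear_combination ht2 / 4
  rw [this, Real.sqrt_sq hρ.le]

/-- On the circle `C(z₀, ρ)`, `|(w - a)(w - b)| = ρ * |‖w‖² - 1|`. -/
lemma beta_abs {z₀ w : ℂ} {ρ : ℝ} (hz₀ : ‖z₀‖ = 1) (hρ : 0 < ρ) (hρ1 : ρ ≤ 1)
    (hw : ‖w - z₀‖ = ρ) :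
    ‖(w - ptA z₀ ρ) * (w - ptB z₀ ρ)‖ = ρ * |‖w‖ ^ 2 - 1| := by
  have hid := beta_identity hz₀ hρ hρ1 hw
  have := congrArg (fun z : ℂ => ‖z‖) hid
  simp only [norm_mul] at this
  rw [RCLike.norm_conj, hz₀, one_mul, hw] at this
  rw [norm_mul, ← this]
  have hcast : ((Complex.normSq w : ℂ) - 1) = ((Complex.normSq w - 1 : ℝ) : ℂ) := by
    push_cast; ring
  rw [hcast, Complex.norm_real, Real.norm_eq_abs, Complex.normSq_eq_norm_sq]
  ring

end Beta


set_option maxHeartbeats 1000000 in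
/-- Uniform bound for the family `Hf` on a small disk around `z₀`, via the maximum
principle applied to `(z - a)(z - b) • Hf n z`. -/
lemma Hf_uniform_bound [CompleteSpace X] {x : Linf X} {g : ℂ → X} {U : Set ℂ} {z₀ : ℂ} {r : ℝ}
    (hU : IsOpen U) (hg : DifferentiableOn ℂ g U)
    (hgz : ∀ z ∈ U, 1 < ‖z‖ → g z = ztrans X x z)
    (hz₀ : ‖z₀‖ = 1) (hr : 0 < r) (hr1 : 2 * r ≤ 1)
    (hsub : closedBall z₀ (2 * r) ⊆ U) :
    ∃ C : ℝ, 0 ≤ C ∧ ∀ n : ℕ, ∀ z ∈ closedBall z₀ r, ‖Hf x g n z‖ ≤ C := by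
  set ρ : ℝ := 2 * r with hρdef
  have hρ : 0 < ρ := by positivity
  have hρ1 : ρ ≤ 1 := hr1
  obtain ⟨M₀, hM₀⟩ := (isCompact_closedBall z₀ ρ).exists_bound_of_continuousOn
    (hg.continuousOn.mono hsub)
  set M : ℝ := max M₀ 0 with hMdef
  have hM0 : 0 ≤ M := le_max_right _ _
  have hM : ∀ z ∈ closedBall z₀ ρ, ‖g z‖ ≤ M := fun z hz => (hM₀ z hz).trans (le_max_left _ _)
  set A : ℂ := ptA z₀ ρ
  set B : ℂ := ptB z₀ ρ
  set N : ℝ := ‖x‖ with hNdef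
  have hN0 : 0 ≤ N := norm_nonneg x
  set C' : ℝ := 4 * ρ ^ 2 * M + 12 * ρ * N with hC'def
  have hC'0 : 0 ≤ C' := by positivity
  -- boundary estimate
  have hbdry : ∀ n : ℕ, ∀ w ∈ sphere z₀ ρ, ‖((w - A) * (w - B)) • Hf x g n w‖ ≤ C' := by
    intro n w hw
    have hwd : ‖w - z₀‖ = ρ := by rwa [mem_sphere_iff_norm] at hw
    have hwcb : w ∈ closedBall z₀ ρ := sphere_subset_closedBall hw
    have hwU : w ∈ U := hsub hwcb
    have habs : ‖(w - A) * (w - B)‖ = ρ * |‖w‖ ^ 2 - 1| := beta_abs hz₀ hρ hρ1 hwd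
    have hwle : ‖w‖ ≤ 1 + ρ := by
      calc ‖w‖ = ‖z₀ + (w - z₀)‖ := by ring_nf
        _ ≤ ‖z₀‖ + ‖w - z₀‖ := norm_add_le _ _
        _ = 1 + ρ := by rw [hz₀, hwd]
    have hβle : ‖(w - A) * (w - B)‖ ≤ 4 * ρ ^ 2 := by
      rw [norm_mul]
      have h1 : ‖w - A‖ ≤ 2 * ρ := by
        calc ‖w - A‖ = ‖(w - z₀) + (z₀ - A)‖ := by ring_nf
          _ ≤ ‖w - z₀‖ + ‖z₀ - A‖ := norm_add_le _ _
          _ = ρ + ρ := by rw [hwd, norm_sub_rev, ptA_dist hz₀ hρ hρ1]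
          _ = 2 * ρ := by ring
      have h2 : ‖w - B‖ ≤ 2 * ρ := by
        calc ‖w - B‖ = ‖(w - z₀) + (z₀ - B)‖ := by ring_nf
          _ ≤ ‖w - z₀‖ + ‖z₀ - B‖ := norm_add_le _ _
          _ = ρ + ρ := by rw [hwd, norm_sub_rev, ptB_dist hz₀ hρ hρ1]
          _ = 2 * ρ := by ring
      calc ‖w - A‖ * ‖w - B‖ ≤ (2 * ρ) * (2 * ρ) :=
            mul_le_mul h1 h2 (norm_nonneg _) (by positivity)
        _ = 4 * ρ ^ 2 := by ring
    rw [norm_smul]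
    rcases lt_trichotomy ‖w‖ 1 with hlt | heq | hgt
    · -- inside the unit disk
      have hH : ‖Hf x g n w‖ ≤ M + N * (1 - ‖w‖)⁻¹ :=
        Hf_norm_le_inner n hlt (hM w hwcb) hM0
      have h1w : 0 < 1 - ‖w‖ := by linarith
      have hβ2 : ‖(w - A) * (w - B)‖ ≤ 2 * ρ * (1 - ‖w‖) := by
        rw [habs, abs_of_nonpos (by nlinarith [norm_nonneg w] : ‖w‖ ^ 2 - 1 ≤ 0)]
        have : -(‖w‖ ^ 2 - 1) = (1 - ‖w‖) * (1 + ‖w‖) := by ring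
        rw [this]
        have : ρ * ((1 - ‖w‖) * (1 + ‖w‖)) = (ρ * (1 + ‖w‖)) * (1 - ‖w‖) := by ring
        rw [this]
        refine mul_le_mul_of_nonneg_right ?_ h1w.le
        nlinarith [norm_nonneg w]
      calc ‖(w - A) * (w - B)‖ * ‖Hf x g n w‖
          ≤ ‖(w - A) * (w - B)‖ * (M + N * (1 - ‖w‖)⁻¹) :=
            mul_le_mul_of_nonneg_left hH (norm_nonneg _)
        _ = ‖(w - A) * (w - B)‖ * M + ‖(w - A) * (w - B)‖ * (N * (1 - ‖w‖)⁻¹) := by ring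
        _ ≤ (4 * ρ ^ 2) * M + (2 * ρ * (1 - ‖w‖)) * (N * (1 - ‖w‖)⁻¹) := by
            refine add_le_add (mul_le_mul_of_nonneg_right hβle hM0) ?_
            exact mul_le_mul_of_nonneg_right hβ2 (by positivity)
        _ = 4 * ρ ^ 2 * M + 2 * ρ * N * ((1 - ‖w‖) * (1 - ‖w‖)⁻¹) := by ring
        _ = 4 * ρ ^ 2 * M + 2 * ρ * N := by rw [mul_inv_cancel₀ h1w.ne']; ring
        _ ≤ C' := by rw [hC'def]; nlinarith
    · -- on the unit circle : the factor vanishes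
      have : ‖(w - A) * (w - B)‖ = 0 := by rw [habs, heq]; simp
      rw [this, zero_mul]
      exact hC'0
    · -- outside the unit disk
      have hH : ‖Hf x g n w‖ ≤ N * (1 - ‖w‖⁻¹)⁻¹ :=
        Hf_norm_le_outer n hgt (hgz w hwU hgt)
      have hw0 : 0 < ‖w‖ := by linarith
      have hw1 : 0 < ‖w‖ - 1 := by linarith
      have hinv : (1 - ‖w‖⁻¹)⁻¹ = ‖w‖ * (‖w‖ - 1)⁻¹ := by
        have h5 : 1 - ‖w‖⁻¹ = (‖w‖ - 1) / ‖w‖ := by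
          rw [sub_div, div_self hw0.ne', one_div]
        rw [h5, inv_div, div_eq_mul_inv]
      have hβ2 : ‖(w - A) * (w - B)‖ = ρ * ((‖w‖ + 1) * (‖w‖ - 1)) := by
        rw [habs, abs_of_nonneg (by nlinarith : (0:ℝ) ≤ ‖w‖ ^ 2 - 1)]
        ring_nf
      calc ‖(w - A) * (w - B)‖ * ‖Hf x g n w‖
          ≤ ‖(w - A) * (w - B)‖ * (N * (1 - ‖w‖⁻¹)⁻¹) :=
            mul_le_mul_of_nonneg_left hH (norm_nonneg _)
        _ = (ρ * ((‖w‖ + 1) * (‖w‖ - 1))) * (N * (‖w‖ * (‖w‖ - 1)⁻¹)) := by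
            rw [hβ2, hinv]
        _ = ρ * (‖w‖ + 1) * N * ‖w‖ * ((‖w‖ - 1) * (‖w‖ - 1)⁻¹) := by ring
        _ = ρ * (‖w‖ + 1) * N * ‖w‖ := by rw [mul_inv_cancel₀ hw1.ne']; ring
        _ ≤ ρ * 3 * N * 2 := by
            have h3 : ‖w‖ + 1 ≤ 3 := by nlinarith
            have h4 : ‖w‖ ≤ 2 := by nlinarith
            have e1 : ρ * (‖w‖ + 1) * N * ‖w‖ ≤ ρ * 3 * N * ‖w‖ := by
              refine mul_le_mul_of_nonneg_right ?_ hw0.le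
              refine mul_le_mul_of_nonneg_right ?_ hN0
              exact mul_le_mul_of_nonneg_left h3 hρ.le
            refine e1.trans ?_
            refine mul_le_mul_of_nonneg_left h4 (by positivity)
        _ ≤ C' := by rw [hC'def]; nlinarith
  -- maximum principle
  have hmax : ∀ n : ℕ, ∀ z ∈ closedBall z₀ ρ, ‖((z - A) * (z - B)) • Hf x g n z‖ ≤ C' := by
    intro n z hz
    have hd : DiffContOnCl ℂ (fun z => ((z - A) * (z - B)) • Hf x g n z) (ball z₀ ρ) := by
      constructor
      · refine DifferentiableOn.smul ?_ ((Hf_diff hg n).mono ?_)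
        · exact ((differentiableOn_id.sub (differentiableOn_const _)).mul
            (differentiableOn_id.sub (differentiableOn_const _)))
        · exact fun y hy => hsub (ball_subset_closedBall hy)
      · rw [closure_ball z₀ hρ.ne']
        refine ContinuousOn.smul ?_ (((Hf_diff hg n).continuousOn).mono hsub)
        exact (((continuous_id.sub continuous_const).mul
          (continuous_id.sub continuous_const))).continuousOn
    refine Complex.norm_le_of_forall_mem_frontier_norm_le isBounded_ball hd ?_ ?_
    · intro w hw
      rw [frontier_ball z₀ hρ.ne'] at hw
      exact hbdry n w hw
    · rwa [closure_ball z₀ hρ.ne']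
  refine ⟨C' / r ^ 2, by positivity, ?_⟩
  intro n z hz
  have hzρ : z ∈ closedBall z₀ ρ := by
    refine closedBall_subset_closedBall ?_ hz
    rw [hρdef]; linarith
  have h1 : r ≤ ‖z - A‖ := by
    have h2 : ‖A - z₀‖ = ρ := ptA_dist hz₀ hρ hρ1
    have h3 : ‖z - z₀‖ ≤ r := by rwa [mem_closedBall_iff_norm] at hz
    calc r = ρ - r := by rw [hρdef]; ring
      _ ≤ ‖A - z₀‖ - ‖z - z₀‖ := by rw [h2]; linarith
      _ ≤ ‖(z - A)‖ := by
          have := norm_sub_norm_le (A - z₀) (z - z₀)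
          calc ‖A - z₀‖ - ‖z - z₀‖ ≤ ‖(A - z₀) - (z - z₀)‖ := norm_sub_norm_le _ _
            _ = ‖z - A‖ := by rw [norm_sub_rev]; ring_nf
  have h1' : r ≤ ‖z - B‖ := by
    have h2 : ‖B - z₀‖ = ρ := ptB_dist hz₀ hρ hρ1
    have h3 : ‖z - z₀‖ ≤ r := by rwa [mem_closedBall_iff_norm] at hz
    calc r = ρ - r := by rw [hρdef]; ring
      _ ≤ ‖B - z₀‖ - ‖z - z₀‖ := by rw [h2]; linarith
      _ ≤ ‖(z - B)‖ := by
          calc ‖B - z₀‖ - ‖z - z₀‖ ≤ ‖(B - z₀) - (z - z₀)‖ := norm_sub_norm_le _ _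
            _ = ‖z - B‖ := by rw [norm_sub_rev]; ring_nf
  have hlow : r ^ 2 ≤ ‖(z - A) * (z - B)‖ := by
    rw [norm_mul, sq]
    exact mul_le_mul h1 h1' hr.le (norm_nonneg _)
  have := hmax n z hzρ
  rw [norm_smul] at this
  rw [le_div_iff₀ (by positivity : (0:ℝ) < r ^ 2)]
  calc ‖Hf x g n z‖ * r ^ 2 ≤ ‖Hf x g n z‖ * ‖(z - A) * (z - B)‖ :=
        mul_le_mul_of_nonneg_left hlow (norm_nonneg _)
    _ = ‖(z - A) * (z - B)‖ * ‖Hf x g n z‖ := mul_comm _ _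
    _ ≤ C' := this


set_option maxHeartbeats 1600000 in
/-- Main construction: a holomorphic extension of the Z-transform near `z₀ ∈ Γ` yields a
holomorphic local solution of the resolvent equation for `S̄` near `z₀`. -/
lemma key [CompleteSpace X] (x : Linf X) {z₀ : ℂ} (hz₀ : ‖z₀‖ = 1) {U : Set ℂ} {g : ℂ → X}
    (hU : IsOpen U) (hz₀U : z₀ ∈ U) (hg : DifferentiableOn ℂ g U)
    (hgz : ∀ z ∈ U, 1 < ‖z‖ → g z = ztrans X x z) :
    ∃ (V : Set ℂ) (h : ℂ → YQ X), IsOpen V ∧ z₀ ∈ V ∧ DifferentiableOn ℂ h V ∧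
      ∀ z ∈ V, ‖z‖ ≠ 1 → z • h z - SbarL X (h z) = Submodule.Quotient.mk x := by
  classical
  obtain ⟨ε, hε, hball⟩ := Metric.isOpen_iff.1 hU z₀ hz₀U
  set r : ℝ := min (ε / 3) (1 / 4) with hrdef
  have hrε : r ≤ ε / 3 := min_le_left _ _
  have hr4 : r ≤ 1 / 4 := min_le_right _ _
  have hr : 0 < r := lt_min (by positivity) (by norm_num)
  have hr1 : 2 * r ≤ 1 := by linarith
  have hsub : closedBall z₀ (2 * r) ⊆ U := by
    refine subset_trans (closedBall_subset_ball ?_) hball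
    linarith
  have hsub' : closedBall z₀ r ⊆ U :=
    subset_trans (closedBall_subset_closedBall (by linarith)) hsub
  obtain ⟨C, hC0, hC⟩ := Hf_uniform_bound hU hg hgz hz₀ hr hr1 hsub
  -- the `l^∞`-valued function
  set F : ℂ → Linf X := fun z =>
    if hz : z ∈ closedBall z₀ r then
      (⟨fun n => Hf x g n z, memℓp_infty ⟨C, by rintro - ⟨n, rfl⟩; exact hC n z hz⟩⟩ : Linf X)
    else 0 with hFdef
  have hFapp : ∀ {z : ℂ}, z ∈ closedBall z₀ r → ∀ n, (F z : ∀ _ : ℕ, X) n = Hf x g n z := by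
    intro z hz n
    simp only [hFdef, dif_pos hz]
  -- uniform Lipschitz estimate for the coordinates, via the Cauchy integral formula
  set L : ℝ := 4 * C / r with hLdef
  have hL0 : 0 ≤ L := by positivity
  have hn2pi : ‖((2 * (Real.pi : ℂ) * Complex.I))⁻¹‖ = (2 * Real.pi)⁻¹ := by
    rw [norm_inv, norm_mul, norm_mul, Complex.norm_I, mul_one, Complex.norm_ofNat,
      Complex.norm_real, Real.norm_eq_abs, abs_of_pos Real.pi_pos]
  have hcoordLip : ∀ (n : ℕ), ∀ z ∈ closedBall z₀ (r / 2), ∀ w ∈ closedBall z₀ (r / 2),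
      ‖Hf x g n z - Hf x g n w‖ ≤ L * ‖z - w‖ := by
    intro n z hz w hw
    have hzn : ‖z - z₀‖ ≤ r / 2 := by rwa [mem_closedBall_iff_norm] at hz
    have hwn : ‖w - z₀‖ ≤ r / 2 := by rwa [mem_closedBall_iff_norm] at hw
    have hd : DiffContOnCl ℂ (Hf x g n) (ball z₀ r) := by
      constructor
      · exact (Hf_diff hg n).mono fun y hy => hsub' (ball_subset_closedBall hy)
      · rw [closure_ball z₀ hr.ne']
        exact (Hf_diff hg n).continuousOn.mono hsub'
    have hzb : z ∈ ball z₀ r := by rw [mem_ball_iff_norm]; linarith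
    have hwb : w ∈ ball z₀ r := by rw [mem_ball_iff_norm]; linarith
    have h1 := hd.two_pi_i_inv_smul_circleIntegral_sub_inv_smul hzb
    have h2 := hd.two_pi_i_inv_smul_circleIntegral_sub_inv_smul hwb
    have hcont : ContinuousOn (Hf x g n) (sphere z₀ r) :=
      ((Hf_diff hg n).continuousOn.mono hsub').mono sphere_subset_closedBall
    have hdist : ∀ {v : ℂ}, ‖v - z₀‖ ≤ r / 2 → ∀ ζ ∈ sphere z₀ r, r / 2 ≤ ‖ζ - v‖ := by
      intro v hv ζ hζ
      have hζn : ‖ζ - z₀‖ = r := by rwa [mem_sphere_iff_norm] at hζ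
      have := norm_sub_norm_le (ζ - z₀) (v - z₀)
      calc r / 2 = r - r / 2 := by ring
        _ ≤ ‖ζ - z₀‖ - ‖v - z₀‖ := by rw [hζn]; linarith
        _ ≤ ‖(ζ - z₀) - (v - z₀)‖ := norm_sub_norm_le _ _
        _ = ‖ζ - v‖ := by ring_nf
    have hcz : ContinuousOn (fun ζ : ℂ => (ζ - z)⁻¹) (sphere z₀ r) := by
      refine (continuousOn_id.sub continuousOn_const).inv₀ fun ζ hζ => ?_
      have h5 := hdist hzn ζ hζ
      have hne : ζ ≠ z := by
        intro hcontra
        rw [hcontra, sub_self, norm_zero] at h5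
        linarith
      simpa using sub_ne_zero.2 hne
    have hcw : ContinuousOn (fun ζ : ℂ => (ζ - w)⁻¹) (sphere z₀ r) := by
      refine (continuousOn_id.sub continuousOn_const).inv₀ fun ζ hζ => ?_
      have h5 := hdist hwn ζ hζ
      have hne : ζ ≠ w := by
        intro hcontra
        rw [hcontra, sub_self, norm_zero] at h5
        linarith
      simpa using sub_ne_zero.2 hne
    have hiz : CircleIntegrable (fun ζ => (ζ - z)⁻¹ • Hf x g n ζ) z₀ r :=
      (hcz.smul hcont).circleIntegrable hr.le
    have hiw : CircleIntegrable (fun ζ => (ζ - w)⁻¹ • Hf x g n ζ) z₀ r :=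
      (hcw.smul hcont).circleIntegrable hr.le
    have hptwise : ∀ ζ ∈ sphere z₀ r,
        ‖(ζ - z)⁻¹ • Hf x g n ζ - (ζ - w)⁻¹ • Hf x g n ζ‖ ≤ C * ((2 / r) * (2 / r)) * ‖z - w‖ := by
      intro ζ hζ
      have hζcb : ζ ∈ closedBall z₀ r := sphere_subset_closedBall hζ
      have hz2 := hdist hzn ζ hζ
      have hw2 := hdist hwn ζ hζ
      have hz2' : (0:ℝ) < ‖ζ - z‖ := lt_of_lt_of_le (by positivity) hz2
      have hw2' : (0:ℝ) < ‖ζ - w‖ := lt_of_lt_of_le (by positivity) hw2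
      rw [← sub_smul, norm_smul]
      have hdiff : (ζ - z)⁻¹ - (ζ - w)⁻¹ = (z - w) * ((ζ - z)⁻¹ * (ζ - w)⁻¹) := by
        have hζz : ζ - z ≠ 0 := by
          intro hcontra; rw [hcontra, norm_zero] at hz2'; exact lt_irrefl _ hz2'
        have hζw : ζ - w ≠ 0 := by
          intro hcontra; rw [hcontra, norm_zero] at hw2'; exact lt_irrefl _ hw2'
        field_simp
        try ring
      rw [hdiff, norm_mul, norm_mul, norm_inv, norm_inv]
      have hinv1 : ‖ζ - z‖⁻¹ ≤ 2 / r := by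
        have h7 : ‖ζ - z‖⁻¹ ≤ (r / 2)⁻¹ := by
          refine inv_anti₀ (by positivity) hz2
        calc ‖ζ - z‖⁻¹ ≤ (r / 2)⁻¹ := h7
          _ = 2 / r := by rw [inv_div]
      have hinv2 : ‖ζ - w‖⁻¹ ≤ 2 / r := by
        have h7 : ‖ζ - w‖⁻¹ ≤ (r / 2)⁻¹ := by
          refine inv_anti₀ (by positivity) hw2
        calc ‖ζ - w‖⁻¹ ≤ (r / 2)⁻¹ := h7
          _ = 2 / r := by rw [inv_div]
      have hfb : ‖Hf x g n ζ‖ ≤ C := hC n ζ hζcb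
      calc ‖z - w‖ * (‖ζ - z‖⁻¹ * ‖ζ - w‖⁻¹) * ‖Hf x g n ζ‖
          ≤ ‖z - w‖ * ((2 / r) * (2 / r)) * C := by
            refine mul_le_mul ?_ hfb (norm_nonneg _) (by positivity)
            refine mul_le_mul_of_nonneg_left ?_ (norm_nonneg _)
            exact mul_le_mul hinv1 hinv2 (by positivity) (by positivity)
        _ = C * ((2 / r) * (2 / r)) * ‖z - w‖ := by ring
    calc ‖Hf x g n z - Hf x g n w‖
        = ‖(2 * (Real.pi : ℂ) * Complex.I)⁻¹ •
            ((∮ ζ in C(z₀, r), (ζ - z)⁻¹ • Hf x g n ζ) -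
             (∮ ζ in C(z₀, r), (ζ - w)⁻¹ • Hf x g n ζ))‖ := by
          rw [smul_sub, h1, h2]
      _ = ‖(2 * (Real.pi : ℂ) * Complex.I)⁻¹‖ *
            ‖∮ ζ in C(z₀, r), ((ζ - z)⁻¹ • Hf x g n ζ - (ζ - w)⁻¹ • Hf x g n ζ)‖ := by
          rw [← circleIntegral.integral_sub hiz hiw, norm_smul]
      _ ≤ (2 * Real.pi)⁻¹ * (2 * Real.pi * r * (C * ((2 / r) * (2 / r)) * ‖z - w‖)) := by
          rw [hn2pi]
          refine mul_le_mul_of_nonneg_left ?_ (by positivity)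
          exact circleIntegral.norm_integral_le_of_norm_le_const hr.le hptwise
      _ = L * ‖z - w‖ := by
          rw [hLdef]
          field_simp
          ring
  -- `F` is Lipschitz, hence continuous, on the small closed ball
  have hFlip : LipschitzOnWith ⟨L, hL0⟩ F (closedBall z₀ (r / 2)) := by
    refine LipschitzOnWith.of_dist_le_mul ?_
    intro z hz w hw
    have hz' : z ∈ closedBall z₀ r := closedBall_subset_closedBall (by linarith) hz
    have hw' : w ∈ closedBall z₀ r := closedBall_subset_closedBall (by linarith) hw
    rw [dist_eq_norm, dist_eq_norm]
    refine lp.norm_le_of_forall_le (by positivity) ?_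
    intro n
    have hco : (↑(F z - F w) : ∀ _ : ℕ, X) n = Hf x g n z - Hf x g n w := by
      rw [lp.coeFn_sub, Pi.sub_apply, hFapp hz' n, hFapp hw' n]
    rw [hco]
    exact hcoordLip n z hz w hw
  have hFcont : ContinuousOn F (closedBall z₀ (r / 2)) := hFlip.continuousOn
  have hFint : CircleIntegrable F z₀ (r / 2) :=
    (hFcont.mono sphere_subset_closedBall).circleIntegrable (by positivity)
  set R : NNReal := ⟨r / 2, by positivity⟩ with hRdef
  have hRpos : 0 < R := by
    rw [← NNReal.coe_lt_coe]
    show (0:ℝ) < r / 2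
    positivity
  have hRr : (R : ℝ) = r / 2 := rfl
  set G : ℂ → Linf X := fun ζw =>
    (2 * (Real.pi : ℂ) * Complex.I)⁻¹ • ∮ ζ in C(z₀, (R : ℝ)), (ζ - ζw)⁻¹ • F ζ with hGdef
  have hFint' : CircleIntegrable F z₀ (R : ℝ) := by rwa [hRr]
  have hGps : HasFPowerSeriesOnBall G (cauchyPowerSeries F z₀ R) z₀ R :=
    hasFPowerSeriesOn_cauchy_integral hFint' hRpos
  have hGdiff : DifferentiableOn ℂ G (ball z₀ (r / 2)) := by
    have h := hGps.differentiableOn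
    rwa [Metric.emetric_ball_nnreal, hRr] at h
  -- coordinates of `G`
  have hGcoord : ∀ z ∈ ball z₀ (r / 2), ∀ n : ℕ, (G z : ∀ _ : ℕ, X) n = Hf x g n z := by
    intro z hz n
    have hzn : ‖z - z₀‖ < r / 2 := by rwa [mem_ball_iff_norm] at hz
    have hdist : ∀ ζ ∈ sphere z₀ (r / 2), ζ ≠ z := by
      intro ζ hζ hcontra
      have hζn : ‖ζ - z₀‖ = r / 2 := by rwa [mem_sphere_iff_norm] at hζ
      rw [hcontra] at hζn
      linarith
    have hcz : ContinuousOn (fun ζ : ℂ => (ζ - z)⁻¹) (sphere z₀ (r / 2)) := by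
      refine (continuousOn_id.sub continuousOn_const).inv₀ fun ζ hζ => ?_
      simpa using sub_ne_zero.2 (hdist ζ hζ)
    have hint2 : CircleIntegrable (fun ζ => (ζ - z)⁻¹ • F ζ) z₀ (r / 2) :=
      (hcz.smul (hFcont.mono sphere_subset_closedBall)).circleIntegrable (by positivity)
    have hd : DiffContOnCl ℂ (Hf x g n) (ball z₀ (r / 2)) := by
      constructor
      · refine (Hf_diff hg n).mono fun y hy => hsub' ?_
        exact closedBall_subset_closedBall (by linarith) (ball_subset_closedBall hy)
      · rw [closure_ball z₀ (by positivity : r / 2 ≠ 0)]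
        exact (Hf_diff hg n).continuousOn.mono
          (subset_trans (closedBall_subset_closedBall (by linarith)) hsub')
    have hcauchy := hd.two_pi_i_inv_smul_circleIntegral_sub_inv_smul hz
    have hcomm : eL n (∮ ζ in C(z₀, r / 2), (ζ - z)⁻¹ • F ζ)
        = ∮ ζ in C(z₀, r / 2), (ζ - z)⁻¹ • Hf x g n ζ := by
      rw [circleIntegral, circleIntegral]
      erw [← (eL n).intervalIntegral_comp_comm hint2.out]
      refine intervalIntegral.integral_congr fun θ _ => ?_
      have hsph : circleMap z₀ (r / 2) θ ∈ sphere z₀ (r / 2) :=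
        circleMap_mem_sphere z₀ (by positivity) θ
      have hcb : circleMap z₀ (r / 2) θ ∈ closedBall z₀ r :=
        closedBall_subset_closedBall (by linarith) (sphere_subset_closedBall hsph)
      rw [map_smul, map_smul, eL_apply, hFapp hcb n]
    have : (G z : ∀ _ : ℕ, X) n = eL n (G z) := rfl
    rw [this, hGdef]
    simp only
    rw [map_smul, hRr, hcomm]
    exact hcauchy
  clear_value G
  -- points of the small ball are nonzero
  have hV0 : ∀ z ∈ ball z₀ (r / 2), z ≠ 0 := by
    intro z hz hcontra
    have hzn : ‖z - z₀‖ < r / 2 := by rwa [mem_ball_iff_norm] at hz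
    rw [hcontra, zero_sub, norm_neg, hz₀] at hzn
    linarith
  -- assemble
  refine ⟨ball z₀ (r / 2), fun z => z⁻¹ • piq (G z), isOpen_ball,
    mem_ball_self (by positivity), ?_, ?_⟩
  · intro z hz
    have hGz : DifferentiableAt ℂ G z := hGdiff.differentiableAt (isOpen_ball.mem_nhds hz)
    have hpiG : DifferentiableAt ℂ (fun ζ => piq (G ζ) : ℂ → YQ X) z :=
      (piq : Linf X →L[ℂ] YQ X).differentiableAt.comp z hGz
    exact ((differentiableAt_inv (hV0 z hz)).smul hpiG).differentiableWithinAt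
  · intro z hz _
    have hne := hV0 z hz
    have heq : z • (G z) - shiftl X (G z) = z • x := by
      ext n
      rw [lp.coeFn_sub, Pi.sub_apply, lp.coeFn_smul, Pi.smul_apply, lp.coeFn_smul, Pi.smul_apply]
      have hsh : (shiftl X (G z) : ∀ _ : ℕ, X) n = (G z : ∀ _ : ℕ, X) (n + 1) := rfl
      rw [hsh, hGcoord z hz n, hGcoord z hz (n + 1), Hf_rec]
      abel
    have hSq : SbarL X (piq (G z)) = piq (shiftl X (G z)) := by
      rw [piq_apply, piq_apply]
      rfl
    calc z • (z⁻¹ • piq (G z)) - SbarL X (z⁻¹ • piq (G z))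
        = z⁻¹ • (z • piq (G z)) - z⁻¹ • SbarL X (piq (G z)) := by
          rw [smul_comm, map_smul]
      _ = z⁻¹ • (z • piq (G z) - SbarL X (piq (G z))) := by rw [smul_sub]
      _ = z⁻¹ • (piq (z • G z - shiftl X (G z))) := by
          rw [map_sub, map_smul, hSq]
      _ = z⁻¹ • piq (z • x) := by rw [heq]
      _ = Submodule.Quotient.mk x := by
          rw [map_smul, smul_smul, inv_mul_cancel₀ hne, one_smul, piq_apply]

end Stmt14Aux


/-- if the Z-transform of `x` extends holomorphically to a neighborhood of
`z₀ ∈ Γ`, then `z₀ ∉ σ(x)`; consequently `σ(x) ⊆ σ_Z(x)`. -/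
theorem stmt14 [CompleteSpace X] (x : Linf X) :
    (∀ z₀ : ℂ, ‖z₀‖ = 1 →
      (∃ (U : Set ℂ) (g : ℂ → X), IsOpen U ∧ z₀ ∈ U ∧ DifferentiableOn ℂ g U ∧
        ∀ z ∈ U, 1 < ‖z‖ → g z = ztrans X x z) → z₀ ∉ specSeq X x) ∧
    specSeq X x ⊆ sigmaZ X x := by
  have main : ∀ z₀ : ℂ, ‖z₀‖ = 1 →
      (∃ (U : Set ℂ) (g : ℂ → X), IsOpen U ∧ z₀ ∈ U ∧ DifferentiableOn ℂ g U ∧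
        ∀ z ∈ U, 1 < ‖z‖ → g z = ztrans X x z) → z₀ ∉ specSeq X x := by
    rintro z₀ h1 ⟨U, g, hU, hzU, hg, hgz⟩ hmem
    exact hmem.2 (Stmt14Aux.key x h1 hU hzU hg hgz)
  exact ⟨main, fun z hz => ⟨hz.1, fun hex => main z hz.1 hex hz⟩⟩
end
end

section
/- The inclusion σ(x) ⊆ σ_Z(x) can be strict: for the real sequence x(0) = 0, x(n) = 1/n for n ≥ 1, one has σ(x) = ∅ (since x ∈ c₀) while 1 ∈ σ_Z(x), because x̃(z) = Σ_{j≥1} z^{-j}/j has no holomorphic extension to any neighborhood of 1. -/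
noncomputable section
open Filter Topology Metric Set

variable (X : Type*) [NormedAddCommGroup X] [NormedSpace ℂ X]

/-- The sequence `x(0) = 0`, `x(n) = 1/n` for `n ≥ 1`, as an element of `l^∞(ℕ₀, ℂ)`. -/
def xex : Linf ℂ :=
  ⟨fun n => if n = 0 then 0 else ((n : ℂ))⁻¹, memℓp_infty ⟨1, by
    rintro - ⟨n, rfl⟩
    match n with
    | 0 => simp
    | (m + 1) =>
      show ‖if m + 1 = 0 then (0 : ℂ) else ((m + 1 : ℕ) : ℂ)⁻¹‖ ≤ 1
      rw [if_neg (Nat.succ_ne_zero m), norm_inv]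
      refine inv_le_one_of_one_le₀ ?_
      rw [show ((m + 1 : ℕ) : ℂ) = ((m + 1 : ℕ) : ℝ) by push_cast; ring]
      rw [Complex.norm_real]
      rw [Real.norm_eq_abs, abs_of_nonneg (by positivity)]
      have h0 : (0 : ℝ) ≤ (m : ℝ) := Nat.cast_nonneg m
      push_cast
      linarith⟩⟩

lemma xex_mem_c0 : xex ∈ c0 ℂ := by
  show Tendsto (fun n => (xex : ∀ _ : ℕ, ℂ) n) atTop (nhds 0)
  have h1 : Filter.Tendsto (fun n : ℕ => ((n : ℝ))⁻¹) atTop (nhds 0) :=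
    tendsto_inv_atTop_zero.comp tendsto_natCast_atTop_atTop
  have h : Filter.Tendsto (fun n : ℕ => ((n : ℂ))⁻¹) atTop (nhds 0) := by
    have h2 := (Complex.continuous_ofReal.tendsto 0).comp h1
    simpa [Function.comp_def] using h2
  refine h.congr' ?_
  filter_upwards [eventually_gt_atTop 0] with n hn
  show ((n : ℂ))⁻¹ = (if n = 0 then 0 else ((n : ℂ))⁻¹)
  rw [if_neg (Nat.pos_iff_ne_zero.mp hn)]

lemma ztrans_xex_eq (z : ℂ) (hz : 1 < ‖z‖) :
    ztrans ℂ xex z = -Complex.log (1 - z⁻¹) := by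
  have hz' : ‖z⁻¹‖ < 1 := by
    rw [norm_inv]
    rw [inv_lt_one_iff₀]
    right; exact hz
  have hs := Complex.hasSum_taylorSeries_neg_log hz'
  rw [ztrans, ← hs.tsum_eq]
  congr 1
  funext n
  show (z⁻¹) ^ n • (if n = 0 then (0 : ℂ) else ((n : ℂ))⁻¹) = (z⁻¹) ^ n / n
  rcases Nat.eq_zero_or_pos n with rfl | hn
  · simp
  · rw [if_neg (Nat.pos_iff_ne_zero.mp hn), smul_eq_mul, div_eq_mul_inv]

set_option synthInstance.maxHeartbeats 800000 in
/-- the inclusion `σ(x) ⊆ σ_Z(x)` can be strict: for `x(0)=0`,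
`x(n) = 1/n` (`n ≥ 1`), one has `σ(x) = ∅` while `1 ∈ σ_Z(x)`. -/
theorem stmt15 : specSeq ℂ xex = ∅ ∧ (1 : ℂ) ∈ sigmaZ ℂ xex := by
  constructor
  · -- σ(x) = ∅ since x ∈ c₀
    ext z₀
    simp only [specSeq, Set.mem_setOf_eq, Set.mem_empty_iff_false, iff_false, not_and, not_not]
    intro _
    refine ⟨Set.univ, fun _ => 0, isOpen_univ, trivial, differentiableOn_const 0, ?_⟩
    intro z _ _
    rw [smul_zero, map_zero, sub_zero]
    exact ((Submodule.Quotient.mk_eq_zero _).mpr xex_mem_c0).symm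
  · refine ⟨by simp, ?_⟩
    rintro ⟨U, g, hU, h1U, hg, hagree⟩
    -- sequence t k = 1 + 1/(k+1) (real, cast to ℂ) tending to 1 from |z| > 1
    set r : ℕ → ℝ := fun k => 1 + ((k : ℝ) + 1)⁻¹ with hr
    set t : ℕ → ℂ := fun k => ((r k : ℝ) : ℂ) with ht
    have hrpos : ∀ k, 1 < r k := fun k => by
      have : (0 : ℝ) < ((k : ℝ) + 1)⁻¹ := by positivity
      simp only [hr]; linarith
    have hrt : Tendsto r atTop (nhds 1) := by
      have h1 : Tendsto (fun k : ℕ => ((k : ℝ) + 1)⁻¹) atTop (nhds 0) := by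
        have := tendsto_inv_atTop_zero.comp
          (tendsto_atTop_add_const_right atTop (1 : ℝ) tendsto_natCast_atTop_atTop)
        simpa [Function.comp_def] using this
      simpa using (tendsto_const_nhds (x := (1 : ℝ))).add h1
    have htt : Tendsto t atTop (nhds 1) := by
      have := (Complex.continuous_ofReal.tendsto 1).comp hrt
      simpa [ht, Function.comp_def] using this
    have htnorm : ∀ k, 1 < ‖t k‖ := fun k => by
      rw [ht]
      simp only [Complex.norm_real, Real.norm_eq_abs]
      rw [abs_of_pos (lt_trans one_pos (hrpos k))]
      exact hrpos k
    -- eventually t k ∈ U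
    have hmemU : ∀ᶠ k in atTop, t k ∈ U := htt.eventually (hU.mem_nhds h1U)
    -- g is continuous at 1
    have hcont : ContinuousAt g 1 :=
      (hg.continuousOn.continuousAt (hU.mem_nhds h1U))
    have hgt : Tendsto (fun k => g (t k)) atTop (nhds (g 1)) := hcont.tendsto.comp htt
    have hgnorm : Tendsto (fun k => ‖g (t k)‖) atTop (nhds ‖g 1‖) := hgt.norm
    -- but ‖g (t k)‖ → ∞
    have hval : ∀ᶠ k in atTop, ‖g (t k)‖ = |Real.log (1 - (r k)⁻¹)| := by
      filter_upwards [hmemU] with k hk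
      rw [hagree (t k) hk (htnorm k), ztrans_xex_eq (t k) (htnorm k)]
      have hpos : (0 : ℝ) < 1 - (r k)⁻¹ := by
        have h1 : (r k)⁻¹ < 1 := inv_lt_one_of_one_lt₀ (hrpos k)
        linarith
      have hcast : (1 : ℂ) - (t k)⁻¹ = (((1 - (r k)⁻¹ : ℝ)) : ℂ) := by
        rw [ht]; push_cast; ring
      rw [hcast, ← Complex.ofReal_log hpos.le, norm_neg, Complex.norm_real, Real.norm_eq_abs]
    have hsk : Tendsto (fun k => 1 - (r k)⁻¹) atTop (nhdsWithin 0 (Set.Ioi 0)) := by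
      have h0 : Tendsto (fun k => 1 - (r k)⁻¹) atTop (nhds 0) := by
        have := ((tendsto_const_nhds (x := (1:ℝ))).sub (hrt.inv₀ one_ne_zero))
        simpa using this
      refine tendsto_nhdsWithin_of_tendsto_nhds_of_eventually_within _ h0 ?_
      filter_upwards with k
      have h1 : (r k)⁻¹ < 1 := inv_lt_one_of_one_lt₀ (hrpos k)
      exact Set.mem_Ioi.mpr (by linarith)
    have hlog : Tendsto (fun k => Real.log (1 - (r k)⁻¹)) atTop atBot :=
      Real.tendsto_log_nhdsGT_zero.comp hsk
    have habs : Tendsto (fun k => |Real.log (1 - (r k)⁻¹)|) atTop atTop := by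
      refine tendsto_atTop_mono (fun k => neg_le_abs _) ?_
      exact tendsto_neg_atBot_atTop.comp hlog
    have hdiv : Tendsto (fun k => ‖g (t k)‖) atTop atTop := habs.congr' (by
      filter_upwards [hval] with k hk; exact hk.symm)
    exact not_tendsto_atTop_of_tendsto_nhds hgnorm hdiv
end
end

section
/- Let V be the operator on l^∞(ℕ₀, X) given by (Vx)(n) = A x(n) + (B*x)(n), and let F be a translation-bi-invariant closed subspace of l^∞(ℕ₀, X) that is invariant under V. If x is a bounded solution of x(n+1) = Ax(n) + Σ_{k=0}^n B(n−k)x(k) + y(n), then σ_F(y) ⊆ σ_F(x). In particular, the equation has no solution in c₀(ℕ₀,X) when y ∉ c₀(ℕ₀,X), and (taking F = AAP(ℕ₀,X)) no asymptotically almost periodic solution when y is not asymptotically almost periodic. -/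
noncomputable section
open Filter Topology Metric Set

variable (X : Type*) [NormedAddCommGroup X] [NormedSpace ℂ X]

/-- The Volterra operator `V x = A x + B * x` on `l^∞`. -/
def Vop (A : X →L[ℂ] X) (B : ℕ → X →L[ℂ] X) (hB : Summable fun n => ‖B n‖)
    (x : Linf X) : Linf X :=
  ⟨fun n => A ((x : ∀ _ : ℕ, X) n) +
      ∑ k ∈ Finset.range (n + 1), B k ((x : ∀ _ : ℕ, X) (n - k)),
    memℓp_infty ⟨(‖A‖ + ∑' n : ℕ, ‖B n‖) * ‖x‖, by
      rintro - ⟨n, rfl⟩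
      have hx : ∀ m : ℕ, ‖(x : ∀ _ : ℕ, X) m‖ ≤ ‖x‖ := fun m =>
        lp.norm_apply_le_norm ENNReal.top_ne_zero x m
      calc ‖A ((x : ∀ _ : ℕ, X) n) +
            ∑ k ∈ Finset.range (n + 1), B k ((x : ∀ _ : ℕ, X) (n - k))‖
          ≤ ‖A ((x : ∀ _ : ℕ, X) n)‖ +
            ‖∑ k ∈ Finset.range (n + 1), B k ((x : ∀ _ : ℕ, X) (n - k))‖ :=
            norm_add_le _ _
        _ ≤ ‖A‖ * ‖x‖ +
            ∑ k ∈ Finset.range (n + 1), ‖B k‖ * ‖x‖ := by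
            refine add_le_add ((A.le_opNorm _).trans
              (mul_le_mul_of_nonneg_left (hx n) (norm_nonneg A))) ?_
            refine (norm_sum_le _ _).trans (Finset.sum_le_sum fun k _ => ?_)
            exact ((B k).le_opNorm _).trans
              (mul_le_mul_of_nonneg_left (hx _) (norm_nonneg (B k)))
        _ ≤ ‖A‖ * ‖x‖ + (∑' m : ℕ, ‖B m‖) * ‖x‖ := by
            rw [← Finset.sum_mul]
            have hsum : ∑ m ∈ Finset.range (n + 1), ‖B m‖ ≤ ∑' m : ℕ, ‖B m‖ :=
              hB.sum_le_tsum _ (fun m _ => norm_nonneg (B m))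
            exact add_le_add le_rfl (mul_le_mul_of_nonneg_right hsum (norm_nonneg x))
        _ = (‖A‖ + ∑' m : ℕ, ‖B m‖) * ‖x‖ := by ring⟩⟩

open scoped Classical

/-- The operator induced by the shift on the quotient `l^∞/F`, for a shift-invariant
subspace `F` (defined to be `0` otherwise). -/
def SbarF (F : Submodule ℂ (Linf X)) : (Linf X ⧸ F) →ₗ[ℂ] (Linf X ⧸ F) :=
  if h : F ≤ F.comap (shiftl X) then F.mapQ F (shiftl X) h else 0

/-- The `F`-spectrum of a bounded sequence `x`: the set of points `z₀ ∈ Γ` to which the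
resolvent function `λ ↦ R(λ, S̄) x̄` in `l^∞/F` has no holomorphic extension. -/
def specF (F : Submodule ℂ (Linf X)) [IsClosed (F : Set (Linf X))] (x : Linf X) :
    Set ℂ :=
  {z₀ : ℂ | ‖z₀‖ = 1 ∧
    ¬ ∃ (U : Set ℂ) (h : ℂ → Linf X ⧸ F), IsOpen U ∧ z₀ ∈ U ∧
      DifferentiableOn ℂ h U ∧
      ∀ z ∈ U, ‖z‖ ≠ 1 → z • h z - SbarF X F (h z) = Submodule.Quotient.mk x}

/-- The space `AAP(ℕ₀, X)` of asymptotically almost periodic sequences: the closed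
subspace generated by `c₀` together with the sequences `(λⁿ v)` with `|λ| = 1`. -/
def AAPsub : Submodule ℂ (Linf X) :=
  (Submodule.span ℂ
    ({x : Linf X | Tendsto (fun n => (x : ∀ _ : ℕ, X) n) atTop (nhds 0)} ∪
     {x : Linf X | ∃ (lam : ℂ) (v : X), ‖lam‖ = 1 ∧
        ∀ n : ℕ, (x : ∀ _ : ℕ, X) n = lam ^ n • v})).topologicalClosure

section Aux
variable {X : Type*} [NormedAddCommGroup X] [NormedSpace ℂ X]

lemma coord_le (x : lp (fun _ : ℕ => X) ⊤) (n : ℕ) : ‖(x : ∀ _ : ℕ, X) n‖ ≤ ‖x‖ :=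
  lp.norm_apply_le_norm ENNReal.top_ne_zero x n

lemma conv_tendsto (B : ℕ → X →L[ℂ] X) (hB : Summable fun n => ‖B n‖)
    (u : ℕ → X) (M : ℝ) (hM : ∀ n, ‖u n‖ ≤ M)
    (hu : Tendsto u atTop (nhds 0)) :
    Tendsto (fun n => ∑ k ∈ Finset.range (n + 1), B k (u (n - k))) atTop (nhds 0) := by
  have hM0 : 0 ≤ M := le_trans (norm_nonneg _) (hM 0)
  have hSB0 : 0 ≤ ∑' n, ‖B n‖ := tsum_nonneg fun n => norm_nonneg _
  set SB := ∑' n, ‖B n‖ with hSBdef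
  rw [Metric.tendsto_atTop]
  intro ε hε
  set ε' := ε / (2 * (SB + M + 1)) with hε'def
  have hε' : 0 < ε' := by positivity
  -- tail of B small
  have htail : Tendsto (fun N => ∑' k, ‖B (k + N)‖) atTop (nhds 0) :=
    tendsto_sum_nat_add (fun m => ‖B m‖)
  obtain ⟨N₁, hN₁⟩ := (Metric.tendsto_atTop.1 htail) ε' hε'
  have hN₁' : ∑' k, ‖B (k + N₁)‖ < ε' := by
    have := hN₁ N₁ le_rfl
    rwa [Real.dist_eq, sub_zero, abs_of_nonneg (tsum_nonneg fun k => norm_nonneg _)] at this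
  obtain ⟨N₂, hN₂⟩ := (Metric.tendsto_atTop.1 hu) ε' hε'
  have hN₂' : ∀ m ≥ N₂, ‖u m‖ ≤ ε' := fun m hm => by
    have := hN₂ m hm; rw [dist_eq_norm, sub_zero] at this; exact this.le
  refine ⟨N₁ + N₂, fun n hn => ?_⟩
  rw [dist_eq_norm, sub_zero]
  have hsplit : ∑ k ∈ Finset.range (n + 1), B k (u (n - k)) =
      ∑ k ∈ Finset.range N₁, B k (u (n - k)) +
      ∑ k ∈ Finset.Ico N₁ (n + 1), B k (u (n - k)) := by
    simp only [Finset.range_eq_Ico]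
    exact (Finset.sum_Ico_consecutive _ (Nat.zero_le _) (by omega)).symm
  have h1 : ‖∑ k ∈ Finset.range N₁, B k (u (n - k))‖ ≤ SB * ε' := by
    refine (norm_sum_le _ _).trans ?_
    have : ∀ k ∈ Finset.range N₁, ‖B k (u (n - k))‖ ≤ ‖B k‖ * ε' := by
      intro k hk
      rw [Finset.mem_range] at hk
      refine ((B k).le_opNorm _).trans (mul_le_mul_of_nonneg_left ?_ (norm_nonneg _))
      exact hN₂' (n - k) (by omega)
    refine (Finset.sum_le_sum this).trans ?_
    rw [← Finset.sum_mul]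
    exact mul_le_mul_of_nonneg_right (hB.sum_le_tsum _ (fun k _ => norm_nonneg _)) hε'.le
  have h2 : ‖∑ k ∈ Finset.Ico N₁ (n + 1), B k (u (n - k))‖ ≤ ε' * M := by
    refine (norm_sum_le _ _).trans ?_
    have hterm : ∀ k ∈ Finset.Ico N₁ (n + 1), ‖B k (u (n - k))‖ ≤ ‖B k‖ * M := fun k _ =>
      ((B k).le_opNorm _).trans (mul_le_mul_of_nonneg_left (hM _) (norm_nonneg _))
    refine (Finset.sum_le_sum hterm).trans ?_
    rw [← Finset.sum_mul]
    refine mul_le_mul_of_nonneg_right ?_ hM0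
    have heq : ∑ k ∈ Finset.Ico N₁ (n + 1), ‖B k‖ =
        ∑ j ∈ Finset.range (n + 1 - N₁), ‖B (j + N₁)‖ := by
      rw [Finset.sum_Ico_eq_sum_range]
      exact Finset.sum_congr rfl fun j _ => by rw [Nat.add_comm]
    rw [heq]
    exact (((summable_nat_add_iff N₁).2 hB).sum_le_tsum _ (fun k _ => norm_nonneg _)
      ).trans hN₁'.le
  calc ‖∑ k ∈ Finset.range (n + 1), B k (u (n - k))‖
      ≤ SB * ε' + ε' * M := by
        rw [hsplit]; exact (norm_add_le _ _).trans (add_le_add h1 h2)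
    _ = ε' * (SB + M) := by ring
    _ < ε := by
        rw [hε'def, div_mul_eq_mul_div, div_lt_iff₀ (by positivity)]
        nlinarith [hε]

end Aux

section Aux2
variable {X : Type*} [NormedAddCommGroup X] [NormedSpace ℂ X]

lemma Vop_coord (A : X →L[ℂ] X) (B : ℕ → X →L[ℂ] X) (hB : Summable fun n => ‖B n‖)
    (x : Linf X) (n : ℕ) :
    (Vop X A B hB x : ∀ _ : ℕ, X) n =
      A ((x : ∀ _ : ℕ, X) n) +
        ∑ k ∈ Finset.range (n + 1), B k ((x : ∀ _ : ℕ, X) (n - k)) := rfl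

lemma sum_reflect_conv (B : ℕ → X →L[ℂ] X) (u : ℕ → X) (n : ℕ) :
    ∑ k ∈ Finset.range (n + 1), B (n - k) (u k) =
      ∑ k ∈ Finset.range (n + 1), B k (u (n - k)) := by
  rw [← Finset.sum_range_reflect (fun j => B j (u (n - j))) (n + 1)]
  refine Finset.sum_congr rfl fun k hk => ?_
  rw [Finset.mem_range] at hk
  have e1 : n + 1 - 1 - k = n - k := by omega
  have e2 : n - (n - k) = k := by omega
  rw [e1, e2]

lemma y_eq_aux (A : X →L[ℂ] X) (B : ℕ → X →L[ℂ] X) (hB : Summable fun n => ‖B n‖)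
    (x y : Linf X)
    (hsol : ∀ n : ℕ, (x : ∀ _ : ℕ, X) (n + 1) =
      A ((x : ∀ _ : ℕ, X) n) +
        ∑ k ∈ Finset.range (n + 1), B (n - k) ((x : ∀ _ : ℕ, X) k) +
        (y : ∀ _ : ℕ, X) n) :
    y = shiftl X x - Vop X A B hB x := by
  ext n
  have h := hsol n
  rw [sum_reflect_conv B _ n] at h
  rw [lp.coeFn_sub, Pi.sub_apply, shiftl_apply, Vop_coord, h]
  abel

lemma comm_mem_c0 (A : X →L[ℂ] X) (B : ℕ → X →L[ℂ] X) (hB : Summable fun n => ‖B n‖)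
    (v : Linf X) :
    shiftl X (Vop X A B hB v) - Vop X A B hB (shiftl X v) ∈ c0 X := by
  have hco : ∀ n : ℕ,
      (shiftl X (Vop X A B hB v) : ∀ _ : ℕ, X) n - (Vop X A B hB (shiftl X v) : ∀ _ : ℕ, X) n
        = B (n + 1) ((v : ∀ _ : ℕ, X) 0) := by
    intro n
    rw [shiftl_apply, Vop_coord, Vop_coord]
    rw [Finset.sum_range_succ]
    have hsums : ∑ k ∈ Finset.range (n + 1), B k ((v : ∀ _ : ℕ, X) (n + 1 - k)) =
        ∑ k ∈ Finset.range (n + 1), B k ((shiftl X v : ∀ _ : ℕ, X) (n - k)) := by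
      refine Finset.sum_congr rfl fun k hk => ?_
      rw [Finset.mem_range] at hk
      rw [shiftl_apply]
      have e : n + 1 - k = n - k + 1 := by omega
      rw [e]
    rw [hsums]
    have h0 : n + 1 - (n + 1) = 0 := by omega
    rw [h0, shiftl_apply]
    abel
  have key : Tendsto (fun n =>
      (shiftl X (Vop X A B hB v) : ∀ _ : ℕ, X) n - (Vop X A B hB (shiftl X v) : ∀ _ : ℕ, X) n)
      atTop (nhds 0) := by
    rw [funext hco]
    refine squeeze_zero_norm (fun n => ((B (n+1)).le_opNorm _)) ?_
    have h1 : Tendsto (fun n => ‖B (n + 1)‖) atTop (nhds 0) :=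
      (hB.tendsto_atTop_zero).comp (tendsto_add_atTop_nat 1)
    simpa using h1.mul_const ‖(v : ∀ _ : ℕ, X) 0‖
  show Tendsto _ atTop (nhds 0)
  have heq : (fun n => ((shiftl X (Vop X A B hB v) - Vop X A B hB (shiftl X v)) : ∀ _ : ℕ, X) n)
      = fun n => (shiftl X (Vop X A B hB v) : ∀ _ : ℕ, X) n
          - (Vop X A B hB (shiftl X v) : ∀ _ : ℕ, X) n := by
    funext n
    simp [lp.coeFn_sub]
  exact heq ▸ key

/-- Truncation of a bounded sequence. -/
def truncSeq (N : ℕ) (x : Linf X) : Linf X :=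
  ⟨fun n => if n < N then (x : ∀ _ : ℕ, X) n else 0, memℓp_infty ⟨‖x‖, by
    rintro - ⟨n, rfl⟩
    dsimp only
    split
    · exact coord_le x n
    · simpa using norm_nonneg x⟩⟩

lemma mem_F_shift_iff (F : Submodule ℂ (Linf X))
    (hbi : ⇑(shiftL X) ⁻¹' (F : Set (Linf X)) = (F : Set (Linf X))) (z : Linf X) :
    shiftl X z ∈ F ↔ z ∈ F := by
  have h := Set.ext_iff.1 hbi z
  simp only [Set.mem_preimage, SetLike.mem_coe] at h
  exact h

lemma trunc_mem_F (F : Submodule ℂ (Linf X))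
    (hbi : ⇑(shiftL X) ⁻¹' (F : Set (Linf X)) = (F : Set (Linf X))) :
    ∀ (N : ℕ) (x : Linf X), truncSeq N x ∈ F := by
  intro N
  induction N with
  | zero =>
    intro x
    have h0 : truncSeq 0 x = 0 := by
      ext n; simp [truncSeq, lp.coeFn_zero]
    rw [h0]; exact F.zero_mem
  | succ N ih =>
    intro x
    rw [← mem_F_shift_iff F hbi]
    have hs : shiftl X (truncSeq (N + 1) x) = truncSeq N (shiftl X x) := by
      ext n
      rw [shiftl_apply]
      show (if n + 1 < N + 1 then (x : ∀ _ : ℕ, X) (n + 1) else 0)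
        = if n < N then (shiftl X x : ∀ _ : ℕ, X) n else 0
      rw [shiftl_apply]
      simp [Nat.succ_lt_succ_iff]
    rw [hs]
    exact ih _

lemma c0_le_F (F : Submodule ℂ (Linf X)) [IsClosed (F : Set (Linf X))]
    (hbi : ⇑(shiftL X) ⁻¹' (F : Set (Linf X)) = (F : Set (Linf X))) :
    c0 X ≤ F := by
  intro x hx
  have hx' : Tendsto (fun n => (x : ∀ _ : ℕ, X) n) atTop (nhds 0) := hx
  rw [← SetLike.mem_coe, ← IsClosed.closure_eq (by assumption : IsClosed (F : Set (Linf X)))]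
  rw [Metric.mem_closure_iff]
  intro ε hε
  obtain ⟨N, hN⟩ := (Metric.tendsto_atTop.1 hx') (ε / 2) (by positivity)
  refine ⟨truncSeq N x, trunc_mem_F F hbi N x, ?_⟩
  rw [dist_eq_norm]
  have hle : ‖x - truncSeq N x‖ ≤ ε / 2 := by
    refine lp.norm_le_of_forall_le (by positivity) fun n => ?_
    rw [lp.coeFn_sub, Pi.sub_apply]
    show ‖(x : ∀ _ : ℕ, X) n - (if n < N then (x : ∀ _ : ℕ, X) n else 0)‖ ≤ ε / 2
    by_cases h : n < N
    · simp [h]; positivity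
    · rw [if_neg h, sub_zero]
      have := hN n (by omega)
      rw [dist_eq_norm, sub_zero] at this
      exact this.le
  linarith

end Aux2

section Aux3
variable {X : Type*} [NormedAddCommGroup X] [NormedSpace ℂ X]

lemma shift_norm_le (m : Linf X) : ‖shiftl X m‖ ≤ ‖m‖ :=
  lp.norm_le_of_forall_le (norm_nonneg m) fun n =>
    lp.norm_apply_le_norm ENNReal.top_ne_zero m (n + 1)

/-- `V` as a linear map. -/
def VopL (A : X →L[ℂ] X) (B : ℕ → X →L[ℂ] X) (hB : Summable fun n => ‖B n‖) :
    Linf X →ₗ[ℂ] Linf X where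
  toFun := Vop X A B hB
  map_add' u v := by
    ext n
    rw [lp.coeFn_add, Pi.add_apply]
    rw [Vop_coord, Vop_coord, Vop_coord]
    simp only [lp.coeFn_add, Pi.add_apply, map_add, Finset.sum_add_distrib]
    abel
  map_smul' c u := by
    ext n
    rw [RingHom.id_apply, lp.coeFn_smul, Pi.smul_apply]
    rw [Vop_coord, Vop_coord]
    simp only [lp.coeFn_smul, Pi.smul_apply, map_smul, Finset.smul_sum, smul_add]

lemma Vop_norm_le (A : X →L[ℂ] X) (B : ℕ → X →L[ℂ] X) (hB : Summable fun n => ‖B n‖)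
    (x : Linf X) : ‖Vop X A B hB x‖ ≤ (‖A‖ + ∑' n, ‖B n‖) * ‖x‖ := by
  refine lp.norm_le_of_forall_le
    (mul_nonneg (add_nonneg (norm_nonneg _) (tsum_nonneg fun i => norm_nonneg _))
      (norm_nonneg _)) fun n => ?_
  rw [Vop_coord]
  have hx : ∀ m : ℕ, ‖(x : ∀ _ : ℕ, X) m‖ ≤ ‖x‖ := coord_le x
  calc ‖A ((x : ∀ _ : ℕ, X) n) +
        ∑ k ∈ Finset.range (n + 1), B k ((x : ∀ _ : ℕ, X) (n - k))‖
      ≤ ‖A ((x : ∀ _ : ℕ, X) n)‖ +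
        ‖∑ k ∈ Finset.range (n + 1), B k ((x : ∀ _ : ℕ, X) (n - k))‖ := norm_add_le _ _
    _ ≤ ‖A‖ * ‖x‖ + ∑ k ∈ Finset.range (n + 1), ‖B k‖ * ‖x‖ := by
        refine add_le_add ((A.le_opNorm _).trans
          (mul_le_mul_of_nonneg_left (hx n) (norm_nonneg A))) ?_
        refine (norm_sum_le _ _).trans (Finset.sum_le_sum fun k _ => ?_)
        exact ((B k).le_opNorm _).trans
          (mul_le_mul_of_nonneg_left (hx _) (norm_nonneg (B k)))
    _ ≤ ‖A‖ * ‖x‖ + (∑' m : ℕ, ‖B m‖) * ‖x‖ := by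
        rw [← Finset.sum_mul]
        exact add_le_add le_rfl (mul_le_mul_of_nonneg_right
          (hB.sum_le_tsum _ (fun m _ => norm_nonneg (B m))) (norm_nonneg x))
    _ = (‖A‖ + ∑' m : ℕ, ‖B m‖) * ‖x‖ := by ring

/-- The operator induced on the quotient by a bounded shift-type operator,
as a continuous linear map. -/
def quotCLM (F : Submodule ℂ (Linf X)) (f : Linf X →ₗ[ℂ] Linf X)
    (hf : F ≤ F.comap f) (C : ℝ) (hfC : ∀ m, ‖f m‖ ≤ C * ‖m‖) :
    (Linf X ⧸ F) →L[ℂ] (Linf X ⧸ F) :=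
  (F.mapQ F f hf).mkContinuous (max C 0 + 1) (by
    intro q
    have hC1 : (0:ℝ) < max C 0 + 1 := by positivity
    refine le_of_forall_pos_le_add fun ε hε => ?_
    obtain ⟨m, hm, hlt⟩ := Submodule.Quotient.norm_mk_lt q
      (show 0 < ε / (max C 0 + 1) by positivity)
    have h1 : F.mapQ F f hf q = Submodule.Quotient.mk (f m) := by rw [← hm]; rfl
    calc ‖F.mapQ F f hf q‖ = ‖(Submodule.Quotient.mk (f m) : Linf X ⧸ F)‖ := by rw [h1]
      _ ≤ ‖f m‖ := Submodule.Quotient.norm_mk_le _ _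
      _ ≤ C * ‖m‖ := hfC m
      _ ≤ (max C 0 + 1) * ‖m‖ := mul_le_mul_of_nonneg_right
          ((le_max_left C 0).trans (le_add_of_nonneg_right zero_le_one)) (norm_nonneg m)
      _ ≤ (max C 0 + 1) * (‖q‖ + ε / (max C 0 + 1)) :=
          mul_le_mul_of_nonneg_left hlt.le hC1.le
      _ = (max C 0 + 1) * ‖q‖ + ε := by
          rw [mul_add, mul_div_cancel₀ _ hC1.ne'])

@[simp] lemma quotCLM_mk (F : Submodule ℂ (Linf X)) (f : Linf X →ₗ[ℂ] Linf X)
    (hf : F ≤ F.comap f) (C : ℝ) (hfC : ∀ m, ‖f m‖ ≤ C * ‖m‖) (m : Linf X) :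
    quotCLM F f hf C hfC (Submodule.Quotient.mk m) = Submodule.Quotient.mk (f m) := rfl

/-- The generating set of `AAPsub`. -/
def AAPgens : Set (Linf X) :=
  {x : Linf X | Tendsto (fun n => (x : ∀ _ : ℕ, X) n) atTop (nhds 0)} ∪
  {x : Linf X | ∃ (lam : ℂ) (v : X), ‖lam‖ = 1 ∧
    ∀ n : ℕ, (x : ∀ _ : ℕ, X) n = lam ^ n • v}

lemma AAPsub_eq : AAPsub X = (Submodule.span ℂ (AAPgens (X := X))).topologicalClosure := rfl

lemma mem_AAP_of_gen {g : Linf X} (hg : g ∈ AAPgens (X := X)) : g ∈ AAPsub X := by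
  rw [AAPsub_eq]
  exact Submodule.le_topologicalClosure _ (Submodule.subset_span hg)

lemma map_AAP (T : (Linf X) →L[ℂ] (Linf X))
    (hT : ∀ g ∈ AAPgens (X := X), T g ∈ AAPsub X)
    {u : Linf X} (hu : u ∈ AAPsub X) : T u ∈ AAPsub X := by
  have hspan : Submodule.span ℂ (AAPgens (X := X)) ≤
      Submodule.comap (T : Linf X →ₗ[ℂ] Linf X) (AAPsub X) :=
    Submodule.span_le.2 fun g hg => hT g hg
  have hmaps : Set.MapsTo T (↑(Submodule.span ℂ (AAPgens (X := X)))) (↑(AAPsub X)) :=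
    fun z hz => hspan hz
  have hu' : u ∈ closure (↑(Submodule.span ℂ (AAPgens (X := X))) : Set (Linf X)) := by
    rw [AAPsub_eq] at hu
    exact hu
  have h2 : T u ∈ closure (↑(AAPsub X) : Set (Linf X)) :=
    map_mem_closure T.continuous hu' hmaps
  rwa [IsClosed.closure_eq] at h2
  rw [AAPsub_eq]
  exact Submodule.isClosed_topologicalClosure _

lemma shift_gens {g : Linf X} (hg : g ∈ AAPgens (X := X)) : shiftL X g ∈ AAPsub X := by
  rcases hg with hg | ⟨lam, v, hlam, hv⟩
  · refine mem_AAP_of_gen (Or.inl ?_)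
    show Tendsto (fun n => (g : ∀ _ : ℕ, X) (n + 1)) atTop (nhds 0)
    exact hg.comp (tendsto_add_atTop_nat 1)
  · refine mem_AAP_of_gen (Or.inr ⟨lam, lam • v, hlam, fun n => ?_⟩)
    show (g : ∀ _ : ℕ, X) (n + 1) = lam ^ n • lam • v
    rw [hv (n + 1), pow_succ, mul_smul]

end Aux3

section Aux4
variable {X : Type*} [NormedAddCommGroup X] [NormedSpace ℂ X] [CompleteSpace X]

lemma Vop_gens (A : X →L[ℂ] X) (B : ℕ → X →L[ℂ] X) (hB : Summable fun n => ‖B n‖)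
    {g : Linf X} (hg : g ∈ AAPgens (X := X)) : Vop X A B hB g ∈ AAPsub X := by
  rcases hg with hg | ⟨lam, v, hlam, hv⟩
  · refine mem_AAP_of_gen (Or.inl ?_)
    show Tendsto (fun n => (Vop X A B hB g : ∀ _ : ℕ, X) n) atTop (nhds 0)
    have h2 : Tendsto (fun n => A ((g : ∀ _ : ℕ, X) n)) atTop (nhds 0) := by
      have := (A.continuous.tendsto 0).comp hg
      simpa [Function.comp_def] using this
    have h3 := conv_tendsto B hB (fun n => (g : ∀ _ : ℕ, X) n) ‖g‖ (coord_le g) hg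
    have key := h2.add h3
    rw [add_zero] at key
    exact key
  · have hlam0 : lam ≠ 0 := by
      intro h; rw [h] at hlam; simp at hlam
    have hnorm : ∀ k : ℕ, ‖(lam⁻¹) ^ k • (B k) v‖ ≤ ‖B k‖ * ‖v‖ := by
      intro k
      rw [norm_smul, norm_pow, norm_inv, hlam, inv_one, one_pow, one_mul]
      exact (B k).le_opNorm v
    have hsum : Summable (fun k : ℕ => (lam⁻¹) ^ k • (B k) v) :=
      Summable.of_norm_bounded (hB.mul_right ‖v‖) hnorm
    set c := ∑' k : ℕ, (lam⁻¹) ^ k • (B k) v with hc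
    set w := A v + c with hw
    set z : Linf X := ⟨fun n => lam ^ n • w, memℓp_infty ⟨‖w‖, by
      rintro - ⟨n, rfl⟩
      dsimp only
      rw [norm_smul, norm_pow, hlam, one_pow, one_mul]⟩⟩ with hzdef
    have hzmem : z ∈ AAPsub X := mem_AAP_of_gen (Or.inr ⟨lam, w, hlam, fun n => rfl⟩)
    have hco : ∀ n : ℕ, (Vop X A B hB g : ∀ _ : ℕ, X) n - (z : ∀ _ : ℕ, X) n
        = lam ^ n • ((∑ k ∈ Finset.range (n + 1), (lam⁻¹) ^ k • (B k) v) - c) := by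
      intro n
      rw [Vop_coord]
      have hsum2 : ∑ k ∈ Finset.range (n + 1), B k ((g : ∀ _ : ℕ, X) (n - k))
          = lam ^ n • ∑ k ∈ Finset.range (n + 1), (lam⁻¹) ^ k • (B k) v := by
        rw [Finset.smul_sum]
        refine Finset.sum_congr rfl fun k hk => ?_
        rw [Finset.mem_range] at hk
        rw [hv (n - k), map_smul, smul_smul]
        congr 1
        rw [pow_sub₀ lam hlam0 (by omega : k ≤ n), inv_pow]
      rw [hv n, map_smul, hsum2]
      show lam ^ n • A v + lam ^ n • _ - lam ^ n • w = _
      rw [hw, smul_sub, smul_add]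
      abel
    have hrmem : Vop X A B hB g - z ∈ AAPsub X := by
      refine mem_AAP_of_gen (Or.inl ?_)
      show Tendsto (fun n => ((Vop X A B hB g - z : Linf X) : ∀ _ : ℕ, X) n) atTop (nhds 0)
      have hpt : Tendsto
          (fun n => (∑ k ∈ Finset.range (n + 1), (lam⁻¹) ^ k • (B k) v) - c)
          atTop (nhds 0) := by
        have h0 := (hsum.hasSum.tendsto_sum_nat.comp (tendsto_add_atTop_nat 1)).sub_const c
        rw [← hc] at h0
        simpa using h0
      have heq2 : (fun n => ((Vop X A B hB g - z : Linf X) : ∀ _ : ℕ, X) n)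
          = fun n => lam ^ n •
            ((∑ k ∈ Finset.range (n + 1), (lam⁻¹) ^ k • (B k) v) - c) := by
        funext n
        have hsub : ((Vop X A B hB g - z : Linf X) : ∀ _ : ℕ, X) n
            = (Vop X A B hB g : ∀ _ : ℕ, X) n - (z : ∀ _ : ℕ, X) n := by
          simp [lp.coeFn_sub]
        rw [hsub, hco n]
      rw [heq2]
      refine squeeze_zero_norm (a := fun n =>
          ‖(∑ k ∈ Finset.range (n + 1), (lam⁻¹) ^ k • (B k) v) - c‖)
          (fun n => le_of_eq ?_) ?_
      · rw [norm_smul, norm_pow, hlam, one_pow, one_mul]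
      · simpa using hpt.norm
    have hVg : Vop X A B hB g = z + (Vop X A B hB g - z) := by abel
    rw [hVg]
    exact Submodule.add_mem _ hzmem hrmem

end Aux4


/-- for a translation-bi-invariant closed subspace `F` invariant under
`V`, any bounded solution `x` of `x(n+1) = A x(n) + (B*x)(n) + y(n)` satisfies
`σ_F(y) ⊆ σ_F(x)`. In particular there is no solution in `c₀` when `y ∉ c₀`, and no
asymptotically almost periodic solution when `y ∉ AAP(ℕ₀, X)`. -/
theorem stmt19 [CompleteSpace X] (A : X →L[ℂ] X) (B : ℕ → X →L[ℂ] X)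
    (hB : Summable fun n => ‖B n‖) (F : Submodule ℂ (Linf X))
    [IsClosed (F : Set (Linf X))]
    (hbi : ⇑(shiftL X) ⁻¹' (F : Set (Linf X)) = (F : Set (Linf X)))
    (hV : ∀ v ∈ F, Vop X A B hB v ∈ F) (x y : Linf X)
    (hsol : ∀ n : ℕ, (x : ∀ _ : ℕ, X) (n + 1) =
      A ((x : ∀ _ : ℕ, X) n) +
        ∑ k ∈ Finset.range (n + 1), B (n - k) ((x : ∀ _ : ℕ, X) k) +
        (y : ∀ _ : ℕ, X) n) :
    specF X F y ⊆ specF X F x ∧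
    (¬ Tendsto (fun n => (y : ∀ _ : ℕ, X) n) atTop (nhds 0) →
      ¬ Tendsto (fun n => (x : ∀ _ : ℕ, X) n) atTop (nhds 0)) ∧
    (y ∉ AAPsub X → x ∉ AAPsub X) := by
  have hsh : F ≤ F.comap (shiftl X) := fun z hz => (mem_F_shift_iff F hbi z).mpr hz
  have hVle : F ≤ F.comap (VopL A B hB) := fun z hz => hV z hz
  have hy : y = shiftl X x - Vop X A B hB x := y_eq_aux A B hB x y hsol
  refine ⟨?_, ?_, ?_⟩
  · -- spectral inclusion
    set Sq := quotCLM F (shiftl X) hsh 1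
      (fun m => by rw [one_mul]; exact shift_norm_le m) with hSqdef
    set Vq := quotCLM F (VopL A B hB) hVle (‖A‖ + ∑' n, ‖B n‖)
      (Vop_norm_le A B hB) with hVqdef
    have hSq : ∀ m : Linf X,
        Sq (Submodule.Quotient.mk m) = Submodule.Quotient.mk (shiftl X m) := fun m => rfl
    have hVq : ∀ m : Linf X,
        Vq (Submodule.Quotient.mk m) = Submodule.Quotient.mk (Vop X A B hB m) := fun m => rfl
    have hSbarF : ∀ q : Linf X ⧸ F, SbarF X F q = Sq q := by
      intro q
      show (if h : F ≤ F.comap (shiftl X) then F.mapQ F (shiftl X) h else 0) q = Sq q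
      rw [dif_pos hsh]
      rfl
    have hc0F : c0 X ≤ F := c0_le_F F hbi
    have hcomm : ∀ q : Linf X ⧸ F, Sq (Vq q) = Vq (Sq q) := by
      intro q
      obtain ⟨m, rfl⟩ := Submodule.Quotient.mk_surjective F q
      rw [hVq m, hSq (Vop X A B hB m), hSq m, hVq (shiftl X m), Submodule.Quotient.eq]
      exact hc0F (comm_mem_c0 A B hB m)
    have hyq : (Submodule.Quotient.mk y : Linf X ⧸ F) =
        Sq (Submodule.Quotient.mk x) - Vq (Submodule.Quotient.mk x) := by
      rw [hSq, hVq, hy, Submodule.Quotient.mk_sub]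
    rintro z₀ ⟨hz₀, hno⟩
    refine ⟨hz₀, fun hcon => hno ?_⟩
    obtain ⟨U, h, hU, hz₀U, hdiff, heq⟩ := hcon
    refine ⟨U, fun z => Sq (h z) - Vq (h z), hU, hz₀U, ?_, ?_⟩
    · exact (Sq.differentiable.comp_differentiableOn hdiff).sub
        (Vq.differentiable.comp_differentiableOn hdiff)
    · intro z hzU hz1
      have hx := heq z hzU hz1
      rw [hSbarF] at hx
      show z • (Sq (h z) - Vq (h z)) - SbarF X F (Sq (h z) - Vq (h z)) =
        Submodule.Quotient.mk y
      rw [hSbarF]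
      calc z • (Sq (h z) - Vq (h z)) - Sq (Sq (h z) - Vq (h z))
          = Sq (z • h z - Sq (h z)) - Vq (z • h z - Sq (h z)) := by
            simp only [map_sub, map_smul, smul_sub]
            rw [hcomm (h z)]
            abel
        _ = Sq (Submodule.Quotient.mk x) - Vq (Submodule.Quotient.mk x) := by rw [hx]
        _ = Submodule.Quotient.mk y := hyq.symm
  · -- no solution in c₀
    intro hy' hx'
    apply hy'
    have h1 : Tendsto (fun n => (x : ∀ _ : ℕ, X) (n + 1)) atTop (nhds 0) :=
      hx'.comp (tendsto_add_atTop_nat 1)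
    have h2 : Tendsto (fun n => A ((x : ∀ _ : ℕ, X) n)) atTop (nhds 0) := by
      have := (A.continuous.tendsto 0).comp hx'
      simpa [Function.comp_def] using this
    have h3 := conv_tendsto B hB (fun n => (x : ∀ _ : ℕ, X) n) ‖x‖ (coord_le x) hx'
    have key := h1.sub (h2.add h3)
    rw [add_zero, sub_zero] at key
    have heqy : (fun n => (y : ∀ _ : ℕ, X) n) = fun n =>
        (x : ∀ _ : ℕ, X) (n + 1) - (A ((x : ∀ _ : ℕ, X) n)
          + ∑ k ∈ Finset.range (n + 1), B k ((x : ∀ _ : ℕ, X) (n - k))) := by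
      funext n
      rw [hy]
      have hsub : ((shiftl X x - Vop X A B hB x : Linf X) : ∀ _ : ℕ, X) n
          = (shiftl X x : ∀ _ : ℕ, X) n - (Vop X A B hB x : ∀ _ : ℕ, X) n := by
        simp [lp.coeFn_sub]
      rw [hsub, shiftl_apply, Vop_coord]
    rw [heqy]
    exact key
  · -- no AAP solution
    intro hy' hx'
    apply hy'
    have hsx : shiftL X x ∈ AAPsub X :=
      map_AAP (shiftL X) (fun g hg => shift_gens hg) hx'
    have hvx : Vop X A B hB x ∈ AAPsub X :=
      map_AAP ((VopL A B hB).mkContinuous (‖A‖ + ∑' n, ‖B n‖) (Vop_norm_le A B hB))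
        (fun g hg => Vop_gens A B hB hg) hx'
    rw [hy]
    exact Submodule.sub_mem _ hsx hvx
end
end
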